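/- arXiv:1602.01860 — 4 statements merged into one kernel-verified Lean document; each statement's English description precedes it below -/
import Mathlib

section
/- Suppose the ESP data satisfies Assumption (B). Then there exists a constant κ ∈ (0,∞) such that whenever (Z₁,Y₁) solves the ESP for a continuous X₁ : [0,∞) → ℝ^J and (Z₂,Y₂) solves the ESP for a continuous X₂ : [0,∞) → ℝ^J, one has ‖Z₁ − Z₂‖_T ≤ κ‖X₁ − X₂‖_T for every T ∈ [0,∞). -/
open scoped RealInnerProductSpace ENNReal NNReal
open Filter Topology Set MeasureTheory

noncomputable section

abbrev EucSp (J : ℕ) : Type := EuclideanSpace ℝ (Fin J)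

/-- The convex cone generated by a set of vectors (by convention `coneGen ∅ = {0}`). -/
def coneGen {J : ℕ} (s : Set (EucSp J)) : Set (EucSp J) :=
  { y | ∃ (k : ℕ) (r : Fin k → ℝ) (v : Fin k → EucSp J),
      (∀ i, 0 ≤ r i) ∧ (∀ i, v i ∈ s) ∧ y = ∑ i, r i • v i }

/-- The polyhedral domain `G`. -/
def Gset {J N : ℕ} (n : Fin N → EucSp J) (c : Fin N → ℝ) : Set (EucSp J) :=
  { x | ∀ i, c i ≤ ⟪x, n i⟫ }

/-- The active index set `I(x)`. -/
def ISet {J N : ℕ} (n : Fin N → EucSp J) (c : Fin N → ℝ) (x : EucSp J) : Set (Fin N) :=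
  { i | ⟪x, n i⟫ = c i }

/-- The cone `d(x)` of admissible reflection directions at `x`. -/
def dCone {J N : ℕ} (n : Fin N → EucSp J) (c : Fin N → ℝ) (d : Fin N → EucSp J)
    (x : EucSp J) : Set (EucSp J) :=
  coneGen (d '' ISet n c x)

/-- `(Z, Y)` solves the extended Skorokhod problem for `X`. -/
def SolvesESP {J N : ℕ} (n : Fin N → EucSp J) (c : Fin N → ℝ) (d : Fin N → EucSp J)
    (X Z Y : ℝ → EucSp J) : Prop :=
  ContinuousOn Z (Ici 0) ∧ ContinuousOn Y (Ici 0) ∧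
  Y 0 ∈ dCone n c d (Z 0) ∧
  (∀ t ∈ Ici (0:ℝ), Z t = X t + Y t) ∧
  (∀ t ∈ Ici (0:ℝ), Z t ∈ Gset n c) ∧
  (∀ s t : ℝ, 0 ≤ s → s < t →
    Y t - Y s ∈ coneGen (⋃ u ∈ Ioc s t, dCone n c d (Z u)))

/-- Assumption (B). -/
def AssumptionB {J N : ℕ} (n d : Fin N → EucSp J) : Prop :=
  ∃ δ : ℝ, 0 < δ ∧ ∃ B : Set (EucSp J),
    IsCompact B ∧ Convex ℝ B ∧ (∀ z ∈ B, -z ∈ B) ∧ (0 : EucSp J) ∈ interior B ∧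
    ∀ i : Fin N, ∀ z ∈ frontier B, |⟪z, n i⟫| < δ →
      ∀ ν : EucSp J, ‖ν‖ = 1 → (∀ y ∈ B, 0 ≤ ⟪ν, y - z⟫) → ⟪ν, d i⟫ = 0

/-- Assumption (π). -/
def AssumptionPi {J N : ℕ} (n : Fin N → EucSp J) (c : Fin N → ℝ) (d : Fin N → EucSp J)
    (proj : EucSp J → EucSp J) : Prop :=
  (∀ x, proj x ∈ Gset n c) ∧ (∀ x ∈ Gset n c, proj x = x) ∧
  (∀ x, x ∉ Gset n c → proj x - x ∈ dCone n c d (proj x))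

/-- The supremum norm `‖f‖_T` of `f` over `[0, T]`. -/
def supNorm {J : ℕ} (f : ℝ → EucSp J) (T : ℝ) : ℝ :=
  ⨆ s : Icc (0:ℝ) T, ‖f s.1‖

/-- The subspace (as a set) `H_x`. -/
def Hset {J N : ℕ} (n : Fin N → EucSp J) (c : Fin N → ℝ) (x : EucSp J) : Set (EucSp J) :=
  { y | ∀ i ∈ ISet n c x, ⟪y, n i⟫ = 0 }

/-- The smooth part `S` of the boundary. -/
def Sstar {J N : ℕ} (n : Fin N → EucSp J) (c : Fin N → ℝ) : Set (EucSp J) :=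
  { x ∈ frontier (Gset n c) | (ISet n c x).ncard = 1 }

/-- The nonsmooth part `N` of the boundary. -/
def Nstar {J N : ℕ} (n : Fin N → EucSp J) (c : Fin N → ℝ) : Set (EucSp J) :=
  { x ∈ frontier (Gset n c) | 2 ≤ (ISet n c x).ncard }

/-- The set `W`. -/
def Wstar {J N : ℕ} (n : Fin N → EucSp J) (c : Fin N → ℝ) (d : Fin N → EucSp J) :
    Set (EucSp J) :=
  { x ∈ Nstar n c | Submodule.span ℝ (Hset n c x ∪ dCone n c d x) ≠ ⊤ }

/-- The boundary jitter property on `[0, T)`. -/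
def Jitter {J N : ℕ} (n : Fin N → EucSp J) (c : Fin N → ℝ) (Z Y : ℝ → EucSp J)
    (T : ℝ≥0∞) : Prop :=
  (∀ t : ℝ, 0 ≤ t → ENNReal.ofReal t < T → Z t ∈ Sstar n c →
    ∀ s u : ℝ, s < t → t < u → ENNReal.ofReal u < T →
      ∃ a ∈ Ioo (max s 0) u, ∃ b ∈ Ioo (max s 0) u, Y a ≠ Y b) ∧
  (volume {t : ℝ | 0 ≤ t ∧ ENNReal.ofReal t < T ∧ Z t ∈ Nstar n c} = 0) ∧
  (Z 0 ∈ Nstar n c →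
    ∀ i ∈ ISet n c (Z 0), ∀ δ : ℝ, 0 < δ → ENNReal.ofReal δ < T →
      ∃ u ∈ Ioo (0:ℝ) δ, ISet n c (Z u) = {i}) ∧
  (∀ t : ℝ, 0 < t → ENNReal.ofReal t < T → Z t ∈ Nstar n c →
    ∀ i ∈ ISet n c (Z t), ∀ δ : ℝ, 0 < δ → δ < t →
      ∃ s ∈ Ioo (t - δ) t, ISet n c (Z s) = {i})

/-- `f` is right-continuous with finite left limits on `[0, T)`. -/
def DrOn {J : ℕ} (f : ℝ → EucSp J) (T : ℝ≥0∞) : Prop :=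
  (∀ t : ℝ, 0 ≤ t → ENNReal.ofReal t < T → Tendsto f (𝓝[>] t) (𝓝 (f t))) ∧
  (∀ t : ℝ, 0 < t → ENNReal.ofReal t < T → ∃ L, Tendsto f (𝓝[<] t) (𝓝 L))

/-- `f ∈ D_{ℓ,r}([0,T))`. -/
def DlrOn {J : ℕ} (f : ℝ → EucSp J) (T : ℝ≥0∞) : Prop :=
  (∀ t : ℝ, 0 < t → ENNReal.ofReal t < T → ∃ L, Tendsto f (𝓝[<] t) (𝓝 L)) ∧
  (∀ t : ℝ, 0 ≤ t → ENNReal.ofReal t < T → ∃ L, Tendsto f (𝓝[>] t) (𝓝 L)) ∧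
  (∀ t : ℝ, 0 < t → ENNReal.ofReal t < T →
    Tendsto f (𝓝[<] t) (𝓝 (f t)) ∨ Tendsto f (𝓝[>] t) (𝓝 (f t)))

/-- `(φ, η)` solves the derivative problem associated with `Z` for `ψ` on `[0, T)`. -/
def SolvesDPOn {J N : ℕ} (n : Fin N → EucSp J) (c : Fin N → ℝ) (d : Fin N → EucSp J)
    (Z ψ φ η : ℝ → EucSp J) (T : ℝ≥0∞) : Prop :=
  DrOn φ T ∧ DrOn η T ∧
  η 0 ∈ Submodule.span ℝ (dCone n c d (Z 0)) ∧
  (∀ t : ℝ, 0 ≤ t → ENNReal.ofReal t < T →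
    φ t = ψ t + η t ∧ φ t ∈ Hset n c (Z t)) ∧
  (∀ s t : ℝ, 0 ≤ s → s < t → ENNReal.ofReal t < T →
    η t - η s ∈ Submodule.span ℝ (⋃ u ∈ Ioc s t, dCone n c d (Z u)))

/-- Decomposition `Y = R L` where the components of `L` are nondecreasing and can
increase only when `Z` is on the corresponding face. -/
def LocalTimeProps {J N : ℕ} (n : Fin N → EucSp J) (c : Fin N → ℝ) (d : Fin N → EucSp J)
    (Z Y : ℝ → EucSp J) (L : ℝ → EucSp N) : Prop :=
  ContinuousOn L (Ici 0) ∧ L 0 = 0 ∧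
  (∀ t ∈ Ici (0:ℝ), ∀ i, 0 ≤ L t i) ∧
  (∀ i, MonotoneOn (fun t => L t i) (Ici 0)) ∧
  (∀ t ∈ Ici (0:ℝ), Y t = ∑ i, L t i • d i) ∧
  (∀ i : Fin N, ∀ s t : ℝ, 0 ≤ s → s ≤ t →
    (∀ u ∈ Icc s t, Z u ∉ {x ∈ frontier (Gset n c) | ⟪x, n i⟫ = c i}) →
    L s i = L t i)

/-- The dual set `B*`. -/
def dualSet {J : ℕ} (B : Set (EucSp J)) : Set (EucSp J) :=
  { y | ∀ z ∈ B, ⟪y, z⟫ ≤ 1 }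

/-- `frontComp Ls k y = Ls 0 (Ls 1 (⋯ (Ls (k-1) y)))`. -/
def frontComp {J : ℕ} (Ls : ℕ → (EucSp J → EucSp J)) : ℕ → EucSp J → EucSp J
  | 0, y => y
  | (k+1), y => frontComp Ls k (Ls k y)

/-- `backComp Ls k y = Ls (k-1) (⋯ (Ls 0 y))`. -/
def backComp {J : ℕ} (Ls : ℕ → (EucSp J → EucSp J)) : ℕ → EucSp J → EucSp J
  | 0, y => y
  | (k+1), y => Ls k (backComp Ls k y)

/-- sup of `⟪ξ, ·⟫` over `K`. -/
def sInn {J : ℕ} (K : Set (EucSp J)) (ξ : EucSp J) : ℝ :=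
  sSup ((fun y => ⟪ξ, y⟫) '' K)

lemma le_sInn {J : ℕ} {K : Set (EucSp J)} (hK : IsCompact K) {y : EucSp J} (hy : y ∈ K)
    (ξ : EucSp J) : ⟪ξ, y⟫ ≤ sInn K ξ := by
  apply le_csSup
  · exact (hK.bddAbove_image (Continuous.continuousOn (continuous_const.inner continuous_id)))
  · exact ⟨y, hy, rfl⟩

lemma sInn_attained {J : ℕ} {K : Set (EucSp J)} (hK : IsCompact K) (hne : K.Nonempty)
    (ξ : EucSp J) : ∃ y ∈ K, sInn K ξ = ⟪ξ, y⟫ := by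
  have himg : IsCompact ((fun y => ⟪ξ, y⟫) '' K) :=
    hK.image_of_continuousOn (Continuous.continuousOn (continuous_const.inner continuous_id))
  have := himg.sSup_mem (hne.image _)
  obtain ⟨y, hy, hEq⟩ := this
  exact ⟨y, hy, hEq.symm⟩

lemma sInn_sub_le {J : ℕ} {K : Set (EucSp J)} (hK : IsCompact K) (hne : K.Nonempty)
    {C : ℝ} (hC : ∀ y ∈ K, ‖y‖ ≤ C) (ξ ξ' : EucSp J) :
    sInn K ξ ≤ sInn K ξ' + C * ‖ξ - ξ'‖ := by
  obtain ⟨y, hy, hEq⟩ := sInn_attained hK hne ξ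
  have h1 : ⟪ξ, y⟫ = ⟪ξ', y⟫ + ⟪ξ - ξ', y⟫ := by
    rw [inner_sub_left]; ring
  have h2 : ⟪ξ - ξ', y⟫ ≤ ‖ξ - ξ'‖ * ‖y‖ := real_inner_le_norm _ _
  have h3 : ⟪ξ', y⟫ ≤ sInn K ξ' := le_sInn hK hy ξ'
  have h4 : ‖ξ - ξ'‖ * ‖y‖ ≤ C * ‖ξ - ξ'‖ := by
    have := hC y hy
    nlinarith [norm_nonneg (ξ - ξ'), norm_nonneg y]
  linarith [hEq ▸ (by linarith : ⟪ξ, y⟫ ≤ sInn K ξ' + C * ‖ξ - ξ'‖)]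

lemma sInn_continuous {J : ℕ} {K : Set (EucSp J)} (hK : IsCompact K) (hne : K.Nonempty)
    {C : ℝ} (hC : ∀ y ∈ K, ‖y‖ ≤ C) : Continuous (sInn K) := by
  rcases le_or_gt C 0 with h | h
  · -- then K ⊆ {0}, sInn K const... handle generally below
    have hC' : ∀ y ∈ K, ‖y‖ ≤ 1 := fun y hy => le_trans (le_trans (hC y hy) h) zero_le_one
    exact (LipschitzWith.of_dist_le_mul (K := ⟨1, zero_le_one⟩) (fun a b => by
      simp only [Real.dist_eq, NNReal.coe_mk, dist_eq_norm]
      rw [Real.norm_eq_abs, abs_le]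
      change -((1:ℝ) * _) ≤ _ ∧ _ ≤ (1:ℝ) * _
      constructor
      · have h1 := sInn_sub_le hK hne hC' b a
        rw [norm_sub_rev b a] at h1
        linarith
      · linarith [sInn_sub_le hK hne hC' a b])).continuous
  · exact (LipschitzWith.of_dist_le_mul (K := ⟨C, le_of_lt h⟩) (fun a b => by
      simp only [Real.dist_eq, NNReal.coe_mk, dist_eq_norm]
      rw [Real.norm_eq_abs, abs_le]
      change -((C:ℝ) * _) ≤ _ ∧ _ ≤ (C:ℝ) * _
      constructor
      · have h1 := sInn_sub_le hK hne hC b a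
        rw [norm_sub_rev b a] at h1
        linarith
      · linarith [sInn_sub_le hK hne hC a b])).continuous

lemma inner_nonpos_of_mem_coneGen {J : ℕ} {s : Set (EucSp J)} {ξ y : EucSp J}
    (h : ∀ v ∈ s, ⟪ξ, v⟫ ≤ 0) (hy : y ∈ coneGen s) : ⟪ξ, y⟫ ≤ 0 := by
  obtain ⟨k, r, v, hr, hv, rfl⟩ := hy
  rw [inner_sum]
  apply Finset.sum_nonpos
  intro i _
  rw [real_inner_smul_right]
  exact mul_nonpos_of_nonneg_of_nonpos (hr i) (h _ (hv i))

lemma dualSet_closed {J : ℕ} (B : Set (EucSp J)) : IsClosed (dualSet B) := by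
  have : dualSet B = ⋂ z ∈ B, {y : EucSp J | ⟪y, z⟫ ≤ 1} := by
    ext y; simp [dualSet]
  rw [this]
  exact isClosed_biInter fun z _ =>
    isClosed_le (continuous_id.inner continuous_const) continuous_const

lemma dualSet_norm_le {J : ℕ} {B : Set (EucSp J)} {ρ : ℝ} (hρ : 0 < ρ)
    (hball : Metric.closedBall 0 ρ ⊆ B) {ξ : EucSp J} (hξ : ξ ∈ dualSet B) :
    ‖ξ‖ ≤ ρ⁻¹ := by
  rcases eq_or_ne ξ 0 with rfl | hne
  · simp only [norm_zero]; exact inv_nonneg.mpr hρ.le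
  · have hy : (ρ * ‖ξ‖⁻¹) • ξ ∈ B := by
      apply hball
      rw [Metric.mem_closedBall, dist_zero_right, norm_smul]
      rw [norm_mul, Real.norm_eq_abs, Real.norm_eq_abs, abs_of_pos hρ,
        abs_of_pos (inv_pos.mpr (norm_pos_iff.mpr hne))]
      rw [mul_assoc, inv_mul_cancel₀ (norm_ne_zero_iff.mpr hne), mul_one]
    have h1 := hξ _ hy
    rw [real_inner_smul_right, real_inner_self_eq_norm_mul_norm] at h1
    have hn : 0 < ‖ξ‖ := norm_pos_iff.mpr hne
    have h2 : ρ * ‖ξ‖ ≤ 1 := by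
      have h3 : ρ * ‖ξ‖⁻¹ * (‖ξ‖ * ‖ξ‖) = ρ * ‖ξ‖ := by field_simp
      linarith [h3 ▸ h1]
    nlinarith [inv_pos.mpr hρ, mul_inv_cancel₀ (ne_of_gt hρ)]
  
lemma dualSet_compact {J : ℕ} {B : Set (EucSp J)} {ρ : ℝ} (hρ : 0 < ρ)
    (hball : Metric.closedBall 0 ρ ⊆ B) : IsCompact (dualSet B) := by
  apply Metric.isCompact_of_isClosed_isBounded (dualSet_closed B)
  apply Bornology.IsBounded.subset (Metric.isBounded_closedBall (x := (0:EucSp J)) (r := ρ⁻¹))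
  intro ξ hξ
  rw [Metric.mem_closedBall, dist_zero_right]
  exact dualSet_norm_le hρ hball hξ

lemma mem_of_dual_le {J : ℕ} {B : Set (EucSp J)} (hcomp : IsCompact B) (hconv : Convex ℝ B)
    (h0B : (0:EucSp J) ∈ B) {x : EucSp J} {q : ℝ} (hq : 0 < q)
    (hd : ∀ ξ ∈ dualSet B, ⟪ξ, x⟫ ≤ q) : q⁻¹ • x ∈ B := by
  by_contra hz
  obtain ⟨f, u, hfu, hfx⟩ := geometric_hahn_banach_closed_point hconv hcomp.isClosed hz
  set η := (InnerProductSpace.toDual ℝ (EucSp J)).symm f with hη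
  have hηf : ∀ w, ⟪η, w⟫ = f w := fun w => InnerProductSpace.toDual_symm_apply
  have hu : 0 < u := by
    have := hfu 0 h0B
    simpa using this
  have hξD : u⁻¹ • η ∈ dualSet B := by
    intro w hw
    rw [real_inner_smul_left, hηf]
    rw [inv_mul_le_iff₀ hu, mul_one]
    exact le_of_lt (hfu w hw)
  have h1 := hd _ hξD
  rw [real_inner_smul_left, hηf] at h1
  have h2 : f x = q * f (q⁻¹ • x) := by
    have h5 : f (q⁻¹ • x) = q⁻¹ * f x := by
      rw [f.map_smul]; simp
    rw [h5, ← mul_assoc, mul_inv_cancel₀ (ne_of_gt hq), one_mul]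
  have h3 : q * u < f x := by
    have := mul_lt_mul_of_pos_left hfx hq
    linarith [h2]
  have h4 : f x ≤ u * q := by
    have h5 := mul_le_mul_of_nonneg_left h1 hu.le
    have h6 : u * (u⁻¹ * f x) = f x := by field_simp
    linarith [h6 ▸ h5]
  linarith

lemma argmax_mem_frontier {J : ℕ} {B : Set (EucSp J)} {ξ y : EucSp J} (hξ : ξ ≠ 0)
    (hyB : y ∈ B) (hmax : ∀ y' ∈ B, ⟪ξ, y'⟫ ≤ ⟪ξ, y⟫) : y ∈ frontier B := by
  rw [frontier_eq_closure_inter_closure]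
  refine ⟨subset_closure hyB, ?_⟩
  rw [mem_closure_iff]
  intro o ho hyo
  rcases Metric.isOpen_iff.mp ho y hyo with ⟨ε, hε, hball⟩
  refine ⟨y + (ε/2) • ‖ξ‖⁻¹ • ξ, hball ?_, fun hmem => ?_⟩
  · rw [Metric.mem_ball, dist_eq_norm, add_sub_cancel_left, norm_smul, norm_smul, norm_inv,
      norm_norm, Real.norm_eq_abs, abs_of_pos (by linarith : (0:ℝ) < ε/2)]
    rw [inv_mul_cancel₀ (norm_ne_zero_iff.mpr hξ), mul_one]
    linarith
  · have h1 : ⟪ξ, y + (ε/2) • ‖ξ‖⁻¹ • ξ⟫ = ⟪ξ, y⟫ + (ε/2) * ‖ξ‖⁻¹ * (‖ξ‖ * ‖ξ‖) := by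
      rw [inner_add_right, real_inner_smul_right, real_inner_smul_right,
        real_inner_self_eq_norm_mul_norm]
      ring
    have hn : 0 < ‖ξ‖ := norm_pos_iff.mpr hξ
    have h2 := hmax _ hmem
    rw [h1] at h2
    have : 0 < (ε/2) * ‖ξ‖⁻¹ * (‖ξ‖ * ‖ξ‖) := by positivity
    linarith

lemma master_le {J : ℕ} {B : Set (EucSp J)} (hcomp : IsCompact B) (hconv : Convex ℝ B)
    (hsymm : ∀ z ∈ B, -z ∈ B) {δ : ℝ} (hδ : 0 < δ) {nv dv : EucSp J}
    (hdn : ⟪dv, nv⟫ = 1)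
    (hprop : ∀ z ∈ frontier B, |⟪z, nv⟫| < δ →
      ∀ ν : EucSp J, ‖ν‖ = 1 → (∀ y ∈ B, 0 ≤ ⟪ν, y - z⟫) → ⟪ν, dv⟫ = 0)
    {z ξ : EucSp J} (hzB : z ∈ B)
    (hout : ∀ y ∈ B, ⟪ξ, y⟫ ≤ ⟪ξ, z⟫) (hzn : ⟪z, nv⟫ < δ) : ⟪ξ, dv⟫ ≤ 0 := by
  by_contra hpos
  push_neg at hpos
  have hξ0 : ξ ≠ 0 := by
    rintro rfl
    rw [inner_zero_left] at hpos
    exact lt_irrefl 0 hpos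
  -- general form of the assumption, for non-normalized outward vectors
  have hprop' : ∀ ξ' : EucSp J, ξ' ≠ 0 → ∀ y ∈ B, (∀ y' ∈ B, ⟪ξ', y'⟫ ≤ ⟪ξ', y⟫) →
      |⟪y, nv⟫| < δ → ⟪ξ', dv⟫ = 0 := by
    intro ξ' hne y hyB hmax habs
    have hfr : y ∈ frontier B := argmax_mem_frontier hne hyB hmax
    have hnorm : ‖(-‖ξ'‖⁻¹) • ξ'‖ = 1 := by
      rw [norm_smul, Real.norm_eq_abs, abs_neg, abs_of_pos
        (inv_pos.mpr (norm_pos_iff.mpr hne)), inv_mul_cancel₀ (norm_ne_zero_iff.mpr hne)]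
    have hinw : ∀ y' ∈ B, 0 ≤ ⟪(-‖ξ'‖⁻¹) • ξ', y' - y⟫ := by
      intro y' hy'
      rw [real_inner_smul_left, inner_sub_right]
      have := hmax y' hy'
      have hn : 0 < ‖ξ'‖⁻¹ := inv_pos.mpr (norm_pos_iff.mpr hne)
      nlinarith
    have h0 := hprop y hfr habs _ hnorm hinw
    rw [real_inner_smul_left] at h0
    have hn : (-‖ξ'‖⁻¹) ≠ 0 := by
      simp only [ne_eq, neg_eq_zero, inv_eq_zero, norm_eq_zero]
      exact hne
    exact (mul_eq_zero.mp h0).resolve_left hn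
  rcases lt_or_ge (-δ) ⟪z, nv⟫ with hmid | hlow
  · exact (ne_of_gt hpos) ((hprop' ξ hξ0 z hzB hout (abs_lt.mpr ⟨hmid, hzn⟩)).symm ▸ rfl)
  · -- the path argument
    set ξθ : ℝ → EucSp J := fun θ => (1 - θ) • ξ + θ • nv with hξθdef
    have hpairval : ∀ θ : ℝ, ⟪ξθ θ, dv⟫ = (1 - θ) * ⟪ξ, dv⟫ + θ := by
      intro θ
      simp only [hξθdef, inner_add_left, real_inner_smul_left]
      rw [real_inner_comm nv dv] at hdn; rw [hdn]
      ring
    have hpair : ∀ θ ∈ Icc (0:ℝ) 1, 0 < ⟪ξθ θ, dv⟫ := by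
      intro θ hθ
      rw [hpairval]
      rcases eq_or_lt_of_le hθ.1 with h0 | h0
      · rw [← h0]; simpa using hpos
      · nlinarith [hθ.2]
    have hξθne : ∀ θ ∈ Icc (0:ℝ) 1, ξθ θ ≠ 0 := by
      intro θ hθ h
      have := hpair θ hθ
      rw [h, inner_zero_left] at this
      exact lt_irrefl 0 this
    set Km : Set (EucSp J) := B ∩ {y | ⟪y, nv⟫ ≤ -δ} with hKmdef
    set Kp : Set (EucSp J) := B ∩ {y | δ ≤ ⟪y, nv⟫} with hKpdef
    have hKmc : IsCompact Km := hcomp.inter_right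
      (isClosed_le (continuous_id.inner continuous_const) continuous_const)
    have hKpc : IsCompact Kp := hcomp.inter_right
      (isClosed_le continuous_const (continuous_id.inner continuous_const))
    have hKmne : Km.Nonempty := ⟨z, hzB, hlow⟩
    have hKpne : Kp.Nonempty := by
      refine ⟨-z, hsymm z hzB, ?_⟩
      rw [mem_setOf_eq, inner_neg_left]
      linarith
    obtain ⟨R, hR⟩ := hcomp.isBounded.exists_norm_le
    have hbB : ∀ y ∈ B, ‖y‖ ≤ R := hR
    have hbKm : ∀ y ∈ Km, ‖y‖ ≤ R := fun y hy => hR y hy.1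
    have hbKp : ∀ y ∈ Kp, ‖y‖ ≤ R := fun y hy => hR y hy.1
    have hBne : B.Nonempty := ⟨z, hzB⟩
    have hcontξθ : Continuous ξθ := by
      apply Continuous.add
      · exact (continuous_const.sub continuous_id).smul continuous_const
      · exact continuous_id.smul continuous_const
    have hfB : Continuous (fun θ => sInn B (ξθ θ)) :=
      (sInn_continuous hcomp hBne hbB).comp hcontξθ
    have hfm : Continuous (fun θ => sInn Km (ξθ θ)) :=
      (sInn_continuous hKmc hKmne hbKm).comp hcontξθ
    have hfp : Continuous (fun θ => sInn Kp (ξθ θ)) :=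
      (sInn_continuous hKpc hKpne hbKp).comp hcontξθ
    -- no middle
    have hnm : ∀ θ ∈ Icc (0:ℝ) 1, ∀ y ∈ B, (∀ y' ∈ B, ⟪ξθ θ, y'⟫ ≤ ⟪ξθ θ, y⟫) →
        δ ≤ |⟪y, nv⟫| := by
      intro θ hθ y hyB hmax
      by_contra habs
      push_neg at habs
      exact (ne_of_gt (hpair θ hθ)) ((hprop' _ (hξθne θ hθ) y hyB hmax habs).symm ▸ rfl)
    set tS : Set ℝ := {θ | sInn B (ξθ θ) ≤ sInn Km (ξθ θ)} with htSdef
    set tS' : Set ℝ := {θ | sInn B (ξθ θ) ≤ sInn Kp (ξθ θ)} with htS'def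
    have hclS : IsClosed tS := isClosed_le hfB hfm
    have hclS' : IsClosed tS' := isClosed_le hfB hfp
    have hcover : Icc (0:ℝ) 1 ⊆ tS ∪ tS' := by
      intro θ hθ
      obtain ⟨y, hyB, hEq⟩ := sInn_attained hcomp hBne (ξθ θ)
      have hmax : ∀ y' ∈ B, ⟪ξθ θ, y'⟫ ≤ ⟪ξθ θ, y⟫ := fun y' h => hEq ▸ le_sInn hcomp h _
      have habs := hnm θ hθ y hyB hmax
      rcases le_abs.mp habs with h | h
      · right
        rw [htS'def, mem_setOf_eq, hEq]
        exact le_sInn hKpc ⟨hyB, h⟩ _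
      · left
        rw [htSdef, mem_setOf_eq, hEq]
        exact le_sInn hKmc ⟨hyB, by rw [mem_setOf_eq]; linarith⟩ _
    have h0S : (0:ℝ) ∈ tS := by
      rw [htSdef, mem_setOf_eq]
      obtain ⟨y, hyB, hEq⟩ := sInn_attained hcomp hBne (ξθ 0)
      have hξθ0 : ξθ 0 = ξ := by simp [hξθdef]
      rw [hEq, hξθ0]
      calc ⟪ξ, y⟫ ≤ ⟪ξ, z⟫ := hout y hyB
        _ ≤ sInn Km ξ := le_sInn hKmc ⟨hzB, hlow⟩ _
    have h1S' : (1:ℝ) ∈ tS' := by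
      rw [htS'def, mem_setOf_eq]
      obtain ⟨y, hyB, hEq⟩ := sInn_attained hcomp hBne (ξθ 1)
      have hξθ1 : ξθ 1 = nv := by simp [hξθdef]
      rw [hEq, hξθ1]
      have hy : δ ≤ ⟪y, nv⟫ := by
        have h1 : ⟪ξθ 1, -z⟫ ≤ sInn B (ξθ 1) := le_sInn hcomp (hsymm z hzB) _
        rw [hEq, hξθ1, inner_neg_right] at h1
        have h2 : ⟪nv, z⟫ ≤ -δ := by rw [real_inner_comm]; exact hlow
        have h3 : ⟪nv, y⟫ = ⟪y, nv⟫ := real_inner_comm _ _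
        linarith
      exact le_sInn hKpc ⟨hyB, hy⟩ _
    obtain ⟨θ₀, hθ₀I, hθ₀S, hθ₀S'⟩ : ∃ θ₀, θ₀ ∈ Icc (0:ℝ) 1 ∧ θ₀ ∈ tS ∧ θ₀ ∈ tS' := by
      have := isPreconnected_closed_iff.mp isPreconnected_Icc tS tS' hclS hclS' hcover
        ⟨0, ⟨le_refl 0, zero_le_one⟩, h0S⟩ ⟨1, ⟨zero_le_one, le_refl 1⟩, h1S'⟩
      obtain ⟨θ₀, h1, h2, h3⟩ := this
      exact ⟨θ₀, h1, h2, h3⟩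
    -- derive contradiction at θ₀
    obtain ⟨ym, hymK, hEqm⟩ := sInn_attained hKmc hKmne (ξθ θ₀)
    obtain ⟨yp, hypK, hEqp⟩ := sInn_attained hKpc hKpne (ξθ θ₀)
    have hmEq : sInn Km (ξθ θ₀) = sInn B (ξθ θ₀) :=
      le_antisymm (hEqm ▸ le_sInn hcomp hymK.1 _) hθ₀S
    have hpEq : sInn Kp (ξθ θ₀) = sInn B (ξθ θ₀) :=
      le_antisymm (hEqp ▸ le_sInn hcomp hypK.1 _) hθ₀S'
    -- a point on the segment with zero pairing with nv
    have hivt : ∃ lam ∈ Icc (0:ℝ) 1, ⟪(1 - lam) • ym + lam • yp, nv⟫ = 0 := by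
      have hcf : ContinuousOn (fun lam : ℝ => ⟪(1 - lam) • ym + lam • yp, nv⟫) (Icc 0 1) := by
        apply Continuous.continuousOn
        apply Continuous.inner _ continuous_const
        exact ((continuous_const.sub continuous_id).smul continuous_const).add
          (continuous_id.smul continuous_const)
      have h0v : (fun lam : ℝ => ⟪(1 - lam) • ym + lam • yp, nv⟫) 0 = ⟪ym, nv⟫ := by simp
      have h1v : (fun lam : ℝ => ⟪(1 - lam) • ym + lam • yp, nv⟫) 1 = ⟪yp, nv⟫ := by simp
      have hsub := intermediate_value_Icc (zero_le_one) hcf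
      have hmem : (0:ℝ) ∈ Icc ((fun lam : ℝ => ⟪(1 - lam) • ym + lam • yp, nv⟫) 0)
          ((fun lam : ℝ => ⟪(1 - lam) • ym + lam • yp, nv⟫) 1) := by
        rw [h0v, h1v]
        constructor
        · have hm2 : ⟪ym, nv⟫ ≤ -δ := hymK.2
          linarith
        · have hp2 : δ ≤ ⟪yp, nv⟫ := hypK.2
          linarith
      obtain ⟨lam, hlam, hlameq⟩ := hsub hmem
      exact ⟨lam, hlam, hlameq⟩
    obtain ⟨lam, hlam, hlameq⟩ := hivt
    set y₀ := (1 - lam) • ym + lam • yp with hy₀def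
    have hy₀B : y₀ ∈ B := hconv hymK.1 hypK.1 (by linarith [hlam.2]) hlam.1 (by ring)
    have hy₀max : ∀ y' ∈ B, ⟪ξθ θ₀, y'⟫ ≤ ⟪ξθ θ₀, y₀⟫ := by
      intro y' hy'
      have hval : ⟪ξθ θ₀, y₀⟫ = sInn B (ξθ θ₀) := by
        rw [hy₀def, inner_add_right, real_inner_smul_right, real_inner_smul_right,
          ← hEqm, ← hEqp, hmEq, hpEq]
        ring
      rw [hval]
      exact le_sInn hcomp hy' _
    have := hnm θ₀ hθ₀I y₀ hy₀B hy₀max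
    rw [hlameq] at this
    simp at this
    linarith

lemma master_ge {J : ℕ} {B : Set (EucSp J)} (hcomp : IsCompact B) (hconv : Convex ℝ B)
    (hsymm : ∀ z ∈ B, -z ∈ B) {δ : ℝ} (hδ : 0 < δ) {nv dv : EucSp J}
    (hdn : ⟪dv, nv⟫ = 1)
    (hprop : ∀ z ∈ frontier B, |⟪z, nv⟫| < δ →
      ∀ ν : EucSp J, ‖ν‖ = 1 → (∀ y ∈ B, 0 ≤ ⟪ν, y - z⟫) → ⟪ν, dv⟫ = 0)
    {z ξ : EucSp J} (hzB : z ∈ B)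
    (hout : ∀ y ∈ B, ⟪ξ, y⟫ ≤ ⟪ξ, z⟫) (hzn : -δ < ⟪z, nv⟫) : 0 ≤ ⟪ξ, dv⟫ := by
  have hout' : ∀ y ∈ B, ⟪-ξ, y⟫ ≤ ⟪-ξ, -z⟫ := by
    intro y hy
    rw [inner_neg_left, inner_neg_left, inner_neg_right, neg_neg]
    have := hout (-y) (hsymm y hy)
    rw [inner_neg_right] at this
    linarith
  have hzn' : ⟪-z, nv⟫ < δ := by
    rw [inner_neg_left]
    linarith
  have h := master_le hcomp hconv hsymm hδ hdn hprop (hsymm z hzB) hout' hzn'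
  rw [inner_neg_left] at h
  linarith

lemma inner_Y_diff_nonpos {J N : ℕ} {n : Fin N → EucSp J} {c : Fin N → ℝ}
    {d : Fin N → EucSp J} {Z : ℝ → EucSp J} {ξ : EucSp J} {s t : ℝ}
    (hsign : ∀ u ∈ Ioc s t, ∀ i ∈ ISet n c (Z u), ⟪ξ, d i⟫ ≤ 0)
    {y : EucSp J} (hy : y ∈ coneGen (⋃ u ∈ Ioc s t, dCone n c d (Z u))) : ⟪ξ, y⟫ ≤ 0 := by
  apply inner_nonpos_of_mem_coneGen _ hy
  intro v hv
  simp only [mem_iUnion] at hv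
  obtain ⟨u, hu, hvd⟩ := hv
  apply inner_nonpos_of_mem_coneGen _ hvd
  rintro w ⟨i, hi, rfl⟩
  exact hsign u hu i hi

lemma inner_dCone_nonpos {J N : ℕ} {n : Fin N → EucSp J} {c : Fin N → ℝ}
    {d : Fin N → EucSp J} {x : EucSp J} {ξ : EucSp J}
    (hsign : ∀ i ∈ ISet n c x, ⟪ξ, d i⟫ ≤ 0)
    {y : EucSp J} (hy : y ∈ dCone n c d x) : ⟪ξ, y⟫ ≤ 0 := by
  apply inner_nonpos_of_mem_coneGen _ hy
  rintro w ⟨i, hi, rfl⟩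
  exact hsign i hi

lemma supNorm_bound {J : ℕ} {f : ℝ → EucSp J} {T : ℝ} (hT : 0 ≤ T)
    (hf : ContinuousOn f (Icc 0 T)) : ∀ t ∈ Icc (0:ℝ) T, ‖f t‖ ≤ supNorm f T := by
  intro t ht
  have hbdd : BddAbove (Set.range fun s : Icc (0:ℝ) T => ‖f s.1‖) := by
    have h1 : IsCompact ((fun t => ‖f t‖) '' Icc 0 T) :=
      isCompact_Icc.image_of_continuousOn hf.norm
    have h2 : (Set.range fun s : Icc (0:ℝ) T => ‖f s.1‖) = (fun t => ‖f t‖) '' Icc 0 T := by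
      ext r
      constructor
      · rintro ⟨s, rfl⟩; exact ⟨s.1, s.2, rfl⟩
      · rintro ⟨x, hx, rfl⟩; exact ⟨⟨x, hx⟩, rfl⟩
    rw [h2]
    exact h1.bddAbove
  exact le_ciSup hbdd (⟨t, ht⟩ : Icc (0:ℝ) T)

lemma supNorm_le_of {J : ℕ} {f : ℝ → EucSp J} {T a : ℝ} (hT : 0 ≤ T)
    (h : ∀ t ∈ Icc (0:ℝ) T, ‖f t‖ ≤ a) : supNorm f T ≤ a := by
  have : Nonempty (Icc (0:ℝ) T) := ⟨⟨0, le_refl 0, hT⟩⟩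
  exact ciSup_le fun s => h s.1 s.2

set_option maxHeartbeats 2000000 in
/-- **Theorem (Lipschitz continuity of the ESM).**
Under Assumption (B), there is `κ ∈ (0,∞)` such that whenever `(Z₁,Y₁)` solves the ESP for a
continuous `X₁` and `(Z₂,Y₂)` solves the ESP for a continuous `X₂`, one has
`‖Z₁ − Z₂‖_T ≤ κ ‖X₁ − X₂‖_T` for every `T ≥ 0`. -/
theorem statement0 (J N : ℕ) (hJ : 1 ≤ J) (hN : 1 ≤ N)
    (n d : Fin N → EucSp J) (c : Fin N → ℝ)
    (hn : ∀ i, ‖n i‖ = 1) (hdn : ∀ i, ⟪d i, n i⟫ = 1)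
    (hGne : (Gset n c).Nonempty)
    (hB : AssumptionB n d) :
    ∃ κ : ℝ, 0 < κ ∧
      ∀ X₁ X₂ Z₁ Y₁ Z₂ Y₂ : ℝ → EucSp J,
        ContinuousOn X₁ (Ici 0) → ContinuousOn X₂ (Ici 0) →
        SolvesESP n c d X₁ Z₁ Y₁ → SolvesESP n c d X₂ Z₂ Y₂ →
        ∀ T : ℝ, 0 ≤ T →
          supNorm (fun s => Z₁ s - Z₂ s) T ≤ κ * supNorm (fun s => X₁ s - X₂ s) T := by
  classical
  obtain ⟨δ, hδ, B, hBcomp, hBconv, hBsymm, hB0int, hBprop⟩ := hB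
  have h0B : (0 : EucSp J) ∈ B := interior_subset hB0int
  obtain ⟨ε₁, hε₁, hball₁⟩ := Metric.mem_nhds_iff.mp (mem_interior_iff_mem_nhds.mp hB0int)
  set ρ : ℝ := ε₁ / 2 with hρdef
  have hρpos : 0 < ρ := by positivity
  have hball : Metric.closedBall (0 : EucSp J) ρ ⊆ B :=
    (Metric.closedBall_subset_ball (by rw [hρdef]; linarith)).trans hball₁
  obtain ⟨R₀, hR₀⟩ := hBcomp.isBounded.exists_norm_le
  set R : ℝ := max R₀ 1 with hRdef
  have hRpos : 0 < R := lt_of_lt_of_le zero_lt_one (le_max_right _ _)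
  have hRB : ∀ y ∈ B, ‖y‖ ≤ R := fun y hy => (hR₀ y hy).trans (le_max_left _ _)
  set D : Set (EucSp J) := dualSet B with hDdef
  have hDcomp : IsCompact D := dualSet_compact hρpos hball
  have hD0 : (0 : EucSp J) ∈ D := by
    intro z hz
    rw [inner_zero_left]
    exact zero_le_one
  have hDne : D.Nonempty := ⟨0, hD0⟩
  have hDbd : ∀ ξ ∈ D, ‖ξ‖ ≤ ρ⁻¹ := fun ξ hξ => dualSet_norm_le hρpos hball hξ
  set F : EucSp J → ℝ := fun x => sInn D x with hFdef
  have hFcont : Continuous F := sInn_continuous hDcomp hDne hDbd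
  have hFle : ∀ x : EucSp J, ∀ ξ ∈ D, ⟪x, ξ⟫ ≤ F x := fun x ξ hξ => le_sInn hDcomp hξ x
  have hFatt : ∀ x : EucSp J, ∃ ξ ∈ D, F x = ⟪x, ξ⟫ := fun x => sInn_attained hDcomp hDne x
  have hFnn : ∀ x : EucSp J, 0 ≤ F x := by
    intro x
    have := hFle x 0 hD0
    rwa [inner_zero_right] at this
  have hFnorm : ∀ x : EucSp J, ‖x‖ ≤ R * F x := by
    intro x
    rcases eq_or_ne x 0 with rfl | hx
    · rw [norm_zero]
      exact mul_nonneg hRpos.le (hFnn 0)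
    · have hnx : 0 < ‖x‖ := norm_pos_iff.mpr hx
      have hmem : (R * ‖x‖)⁻¹ • x ∈ D := by
        intro zz hzz
        rw [real_inner_smul_left]
        have h1 : ⟪x, zz⟫ ≤ ‖x‖ * ‖zz‖ := real_inner_le_norm x zz
        have h2 : ‖zz‖ ≤ R := hRB zz hzz
        have h3 : (0:ℝ) < R * ‖x‖ := by positivity
        rw [inv_mul_le_iff₀ h3, mul_one]
        nlinarith [norm_nonneg zz]
      have hle := hFle x _ hmem
      rw [real_inner_smul_right, real_inner_self_eq_norm_mul_norm] at hle
      have h4 : (R * ‖x‖)⁻¹ * (‖x‖ * ‖x‖) = ‖x‖ / R := by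
        field_simp
      rw [h4, div_le_iff₀ hRpos] at hle
      linarith
  -- bridge lemmas from the master lemmas
  have key₁ : ∀ x ξ : EucSp J, ξ ∈ D → (∀ ξ' ∈ D, ⟪x, ξ'⟫ ≤ ⟪x, ξ⟫) → 0 < ⟪x, ξ⟫ →
      ∀ i : Fin N, ⟪x, n i⟫ < δ * ⟪x, ξ⟫ → ⟪ξ, d i⟫ ≤ 0 := by
    intro x ξ hξD hmax hq i hlt
    have hzB : ⟪x, ξ⟫⁻¹ • x ∈ B := by
      apply mem_of_dual_le hBcomp hBconv h0B hq
      intro ξ' hξ'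
      rw [real_inner_comm x ξ']
      exact hmax ξ' hξ'
    have hout : ∀ y ∈ B, ⟪ξ, y⟫ ≤ ⟪ξ, ⟪x, ξ⟫⁻¹ • x⟫ := by
      intro y hy
      rw [real_inner_smul_right, ← real_inner_comm ξ x, inv_mul_cancel₀ (ne_of_gt hq)]
      exact hξD y hy
    have hzn : ⟪⟪x, ξ⟫⁻¹ • x, n i⟫ < δ := by
      rw [real_inner_smul_left]
      have h1 := mul_lt_mul_of_pos_left hlt (inv_pos.mpr hq)
      have h2 : ⟪x, ξ⟫⁻¹ * (δ * ⟪x, ξ⟫) = δ := by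
        rw [mul_comm δ, ← mul_assoc, inv_mul_cancel₀ (ne_of_gt hq), one_mul]
      linarith [h2 ▸ h1]
    exact master_le hBcomp hBconv hBsymm hδ (hdn i) (hBprop i) hzB hout hzn
  have key₂ : ∀ x ξ : EucSp J, ξ ∈ D → (∀ ξ' ∈ D, ⟪x, ξ'⟫ ≤ ⟪x, ξ⟫) → 0 < ⟪x, ξ⟫ →
      ∀ i : Fin N, -(δ * ⟪x, ξ⟫) < ⟪x, n i⟫ → 0 ≤ ⟪ξ, d i⟫ := by
    intro x ξ hξD hmax hq i hlt
    have hzB : ⟪x, ξ⟫⁻¹ • x ∈ B := by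
      apply mem_of_dual_le hBcomp hBconv h0B hq
      intro ξ' hξ'
      rw [real_inner_comm x ξ']
      exact hmax ξ' hξ'
    have hout : ∀ y ∈ B, ⟪ξ, y⟫ ≤ ⟪ξ, ⟪x, ξ⟫⁻¹ • x⟫ := by
      intro y hy
      rw [real_inner_smul_right, ← real_inner_comm ξ x, inv_mul_cancel₀ (ne_of_gt hq)]
      exact hξD y hy
    have hzn : -δ < ⟪⟪x, ξ⟫⁻¹ • x, n i⟫ := by
      rw [real_inner_smul_left]
      have h1 := mul_lt_mul_of_pos_left hlt (inv_pos.mpr hq)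
      have h2 : ⟪x, ξ⟫⁻¹ * -(δ * ⟪x, ξ⟫) = -δ := by
        rw [mul_neg, mul_comm δ, ← mul_assoc, inv_mul_cancel₀ (ne_of_gt hq), one_mul]
      linarith [h2 ▸ h1]
    exact master_ge hBcomp hBconv hBsymm hδ (hdn i) (hBprop i) hzB hout hzn
  refine ⟨1 + 2 * R / δ, by positivity, ?_⟩
  intro X₁ X₂ Z₁ Y₁ Z₂ Y₂ hX₁ hX₂ hS₁ hS₂ T hT
  obtain ⟨hZ₁c, hY₁c, hY₁0, hZX₁, hZG₁, hYc₁⟩ := hS₁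
  obtain ⟨hZ₂c, hY₂c, hY₂0, hZX₂, hZG₂, hYc₂⟩ := hS₂
  set u : ℝ → EucSp J := fun s => X₁ s - X₂ s with hudef
  set v : ℝ → EucSp J := fun s => Y₁ s - Y₂ s with hvdef
  set w : ℝ → EucSp J := fun s => Z₁ s - Z₂ s with hwdef
  set U : ℝ := supNorm u T with hUdef
  have hucont : ContinuousOn u (Icc 0 T) := (hX₁.sub hX₂).mono Icc_subset_Ici_self
  have hvcont : ContinuousOn v (Icc 0 T) := (hY₁c.sub hY₂c).mono Icc_subset_Ici_self
  have hwcont : ContinuousOn w (Icc 0 T) := (hZ₁c.sub hZ₂c).mono Icc_subset_Ici_self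
  have hUb : ∀ t ∈ Icc (0:ℝ) T, ‖u t‖ ≤ U := supNorm_bound hT hucont
  have h0mem : (0:ℝ) ∈ Icc (0:ℝ) T := ⟨le_refl 0, hT⟩
  have hU0 : 0 ≤ U := le_trans (norm_nonneg (u 0)) (hUb 0 h0mem)
  have hwuv : ∀ t, 0 ≤ t → w t = u t + v t := by
    intro t ht
    simp only [hwdef, hudef, hvdef]
    rw [hZX₁ t ht, hZX₂ t ht]
    abel
  have hun : ∀ t ∈ Icc (0:ℝ) T, ∀ i : Fin N, |⟪u t, n i⟫| ≤ U := by
    intro t ht i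
    calc |⟪u t, n i⟫| ≤ ‖u t‖ * ‖n i‖ := abs_real_inner_le_norm _ _
      _ = ‖u t‖ := by rw [hn i, mul_one]
      _ ≤ U := hUb t ht
  have hsgnZ₁ : ∀ t, 0 ≤ t → ∀ i ∈ ISet n c (Z₁ t), ⟪w t, n i⟫ ≤ 0 := by
    intro t ht i hi
    have h1 : ⟪Z₁ t, n i⟫ = c i := hi
    have h2 : c i ≤ ⟪Z₂ t, n i⟫ := hZG₂ t ht i
    simp only [hwdef]
    rw [inner_sub_left, h1]
    linarith
  have hsgnZ₂ : ∀ t, 0 ≤ t → ∀ i ∈ ISet n c (Z₂ t), 0 ≤ ⟪w t, n i⟫ := by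
    intro t ht i hi
    have h1 : ⟪Z₂ t, n i⟫ = c i := hi
    have h2 : c i ≤ ⟪Z₁ t, n i⟫ := hZG₁ t ht i
    simp only [hwdef]
    rw [inner_sub_left, h1]
    linarith
  -- main claim : F (v t) ≤ 2U/δ on [0,T]
  have Mclaim : ∀ t ∈ Icc (0:ℝ) T, F (v t) ≤ 2 * U / δ := by
    by_contra hcon
    push_neg at hcon
    obtain ⟨t₁, ht₁, hFt₁⟩ := hcon
    have hIccne : (Icc (0:ℝ) T).Nonempty := ⟨0, h0mem⟩
    have hgcont : ContinuousOn (fun t => F (v t)) (Icc 0 T) := hFcont.comp_continuousOn hvcont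
    obtain ⟨tstar, htstar, hmax⟩ := isCompact_Icc.exists_isMaxOn hIccne hgcont
    set M : ℝ := F (v tstar) with hMdef
    have hM : 2 * U / δ < M := lt_of_lt_of_le hFt₁ (hmax ht₁)
    have h2Uδ : 0 ≤ 2 * U / δ := div_nonneg (by linarith) hδ.le
    have hMpos : 0 < M := lt_of_le_of_lt h2Uδ hM
    have hδM : 2 * U < δ * M := by
      rw [div_lt_iff₀ hδ] at hM
      linarith
    -- initial bound
    have hv0 : F (v 0) ≤ U / δ := by
      by_contra hv0'
      push_neg at hv0'
      have hq0 : 0 < F (v 0) := lt_of_le_of_lt (div_nonneg hU0 hδ.le) hv0'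
      obtain ⟨ξ, hξD, hξeq⟩ := hFatt (v 0)
      have hq : 0 < ⟪v 0, ξ⟫ := by rw [← hξeq]; exact hq0
      have hmax0 : ∀ ξ' ∈ D, ⟪v 0, ξ'⟫ ≤ ⟪v 0, ξ⟫ := by
        intro ξ' h
        rw [← hξeq]
        exact hFle (v 0) ξ' h
      have hUlt : U < δ * ⟪v 0, ξ⟫ := by
        rw [← hξeq]
        rw [div_lt_iff₀ hδ] at hv0'
        linarith
      have hs₁ : ∀ i ∈ ISet n c (Z₁ 0), ⟪ξ, d i⟫ ≤ 0 := by
        intro i hi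
        apply key₁ (v 0) ξ hξD hmax0 hq i
        have h2 := hsgnZ₁ 0 (le_refl 0) i hi
        have h4 := abs_le.mp (hun 0 h0mem i)
        have h5 : ⟪v 0, n i⟫ = ⟪w 0, n i⟫ - ⟪u 0, n i⟫ := by
          rw [hwuv 0 (le_refl 0), inner_add_left]
          ring
        linarith [h5]
      have hs₂ : ∀ i ∈ ISet n c (Z₂ 0), 0 ≤ ⟪ξ, d i⟫ := by
        intro i hi
        apply key₂ (v 0) ξ hξD hmax0 hq i
        have h2 := hsgnZ₂ 0 (le_refl 0) i hi
        have h4 := abs_le.mp (hun 0 h0mem i)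
        have h5 : ⟪v 0, n i⟫ = ⟪w 0, n i⟫ - ⟪u 0, n i⟫ := by
          rw [hwuv 0 (le_refl 0), inner_add_left]
          ring
        linarith [h5]
      have hp₁ : ⟪ξ, Y₁ 0⟫ ≤ 0 := inner_dCone_nonpos hs₁ hY₁0
      have hp₂ : ⟪-ξ, Y₂ 0⟫ ≤ 0 := inner_dCone_nonpos (fun i hi => by
        rw [inner_neg_left]
        linarith [hs₂ i hi]) hY₂0
      rw [inner_neg_left] at hp₂
      have hv0eq : ⟪v 0, ξ⟫ = ⟪ξ, Y₁ 0⟫ - ⟪ξ, Y₂ 0⟫ := by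
        simp only [hvdef]
        rw [inner_sub_left, real_inner_comm (Y₁ 0) ξ, real_inner_comm (Y₂ 0) ξ]
      rw [hv0eq] at hq
      linarith
    -- oscillation threshold
    set ε₀ : ℝ := (δ * M / 2 - U) / 2 with hε₀def
    have hε₀pos : 0 < ε₀ := by
      rw [hε₀def]
      linarith
    have hkey : U + ε₀ < δ * (M / 2) := by
      rw [hε₀def]
      linarith
    -- uniform continuity of w
    have hwuc := isCompact_Icc.uniformContinuousOn_of_continuous hwcont
    rw [Metric.uniformContinuousOn_iff] at hwuc
    obtain ⟨η, hη, hηspec⟩ := hwuc ε₀ hε₀pos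
    -- last time below M/2
    set A : Set ℝ := Icc (0:ℝ) tstar ∩ (fun r => F (v r)) ⁻¹' Iic (M / 2) with hAdef
    have htsub : Icc (0:ℝ) tstar ⊆ Icc (0:ℝ) T := Icc_subset_Icc_right htstar.2
    have hAclosed : IsClosed A :=
      ContinuousOn.preimage_isClosed_of_isClosed (hgcont.mono htsub) isClosed_Icc isClosed_Iic
    have hAcomp : IsCompact A := isCompact_Icc.of_isClosed_subset hAclosed inter_subset_left
    have hA0 : (0:ℝ) ∈ A := by
      constructor
      · exact ⟨le_refl 0, htstar.1⟩
      · simp only [mem_preimage, mem_Iic]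
        have : U / δ ≤ M / 2 := by
          rw [div_le_iff₀ hδ]
          linarith
        linarith [hv0]
    have hAne : A.Nonempty := ⟨0, hA0⟩
    have hAbdd : BddAbove A := ⟨tstar, fun r hr => hr.1.2⟩
    set s₀ : ℝ := sSup A with hs₀def
    have hs₀A : s₀ ∈ A := hAcomp.sSup_mem hAne
    have hs₀mem : s₀ ∈ Icc (0:ℝ) tstar := hs₀A.1
    have hgs₀ : F (v s₀) ≤ M / 2 := hs₀A.2
    have hafter : ∀ r, s₀ < r → r ≤ tstar → M / 2 < F (v r) := by
      intro r h1 h2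
      by_contra h3
      push_neg at h3
      have hrA : r ∈ A := ⟨⟨le_trans hs₀mem.1 h1.le, h2⟩, h3⟩
      exact absurd (le_csSup hAbdd hrA) (not_le.mpr h1)
    have hs₀lt : s₀ < tstar := by
      rcases lt_or_eq_of_le hs₀mem.2 with h | h
      · exact h
      · exfalso
        rw [h] at hgs₀
        rw [← hMdef] at hgs₀
        linarith
    -- one-step estimate
    have hstep : ∀ a b : ℝ, 0 ≤ a → a < b → b ≤ T → b - a ≤ η → M / 2 < F (v b) →
        F (v b) ≤ F (v a) := by
      intro a b ha hab hbT hba hMb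
      have hb0 : (0:ℝ) ≤ b := le_trans ha hab.le
      have hbmem : b ∈ Icc (0:ℝ) T := ⟨hb0, hbT⟩
      have hq0 : 0 < F (v b) := lt_trans (by linarith) hMb
      obtain ⟨ξ, hξD, hξeq⟩ := hFatt (v b)
      have hq : 0 < ⟪v b, ξ⟫ := by rw [← hξeq]; exact hq0
      have hmaxb : ∀ ξ' ∈ D, ⟪v b, ξ'⟫ ≤ ⟪v b, ξ⟫ := by
        intro ξ' h
        rw [← hξeq]
        exact hFle (v b) ξ' h
      have hδq : δ * (M / 2) < δ * ⟪v b, ξ⟫ := by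
        rw [← hξeq]
        exact mul_lt_mul_of_pos_left hMb hδ
      have hvbni : ∀ u_ ∈ Ioc a b, ∀ i : Fin N,
          |⟪v b, n i⟫ - ⟪w u_, n i⟫| ≤ ε₀ + U := by
        intro u_ hu_ i
        have hu0 : 0 ≤ u_ := le_trans ha hu_.1.le
        have huT : u_ ≤ T := le_trans hu_.2 hbT
        have hws : dist (w b) (w u_) < ε₀ := by
          apply hηspec b hbmem u_ ⟨hu0, huT⟩
          rw [Real.dist_eq, abs_of_nonneg (by linarith [hu_.2] : (0:ℝ) ≤ b - u_)]
          linarith [hu_.1]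
        rw [dist_eq_norm] at hws
        have h3 : |⟪w b - w u_, n i⟫| ≤ ε₀ := by
          calc |⟪w b - w u_, n i⟫| ≤ ‖w b - w u_‖ * ‖n i‖ := abs_real_inner_le_norm _ _
            _ = ‖w b - w u_‖ := by rw [hn i, mul_one]
            _ ≤ ε₀ := hws.le
        have h4 := hun b hbmem i
        have h5 : ⟪v b, n i⟫ - ⟪w u_, n i⟫ = ⟪w b - w u_, n i⟫ - ⟪u b, n i⟫ := by
          have hw := hwuv b hb0
          have hvb : v b = w u_ + (w b - w u_) - u b := by
            rw [hw]
            abel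
          rw [hvb, inner_sub_left, inner_add_left]
          ring
        rw [h5]
        calc |⟪w b - w u_, n i⟫ - ⟪u b, n i⟫| ≤ |⟪w b - w u_, n i⟫| + |⟪u b, n i⟫| :=
          abs_sub _ _
          _ ≤ ε₀ + U := add_le_add h3 h4
      have hsgn₁ : ∀ u_ ∈ Ioc a b, ∀ i ∈ ISet n c (Z₁ u_), ⟪ξ, d i⟫ ≤ 0 := by
        intro u_ hu_ i hi
        apply key₁ (v b) ξ hξD hmaxb hq i
        have h1 := hsgnZ₁ u_ (le_trans ha hu_.1.le) i hi
        have h2 := abs_le.mp (hvbni u_ hu_ i)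
        linarith
      have hsgn₂ : ∀ u_ ∈ Ioc a b, ∀ i ∈ ISet n c (Z₂ u_), 0 ≤ ⟪ξ, d i⟫ := by
        intro u_ hu_ i hi
        apply key₂ (v b) ξ hξD hmaxb hq i
        have h1 := hsgnZ₂ u_ (le_trans ha hu_.1.le) i hi
        have h2 := abs_le.mp (hvbni u_ hu_ i)
        linarith
      have hp₁ : ⟪ξ, Y₁ b - Y₁ a⟫ ≤ 0 := inner_Y_diff_nonpos hsgn₁ (hYc₁ a b ha hab)
      have hp₂ : ⟪-ξ, Y₂ b - Y₂ a⟫ ≤ 0 := inner_Y_diff_nonpos (fun u_ hu_ i hi => by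
        rw [inner_neg_left]
        linarith [hsgn₂ u_ hu_ i hi]) (hYc₂ a b ha hab)
      rw [inner_neg_left] at hp₂
      have hvdiff : ⟪v b - v a, ξ⟫ = ⟪ξ, Y₁ b - Y₁ a⟫ - ⟪ξ, Y₂ b - Y₂ a⟫ := by
        have hd : v b - v a = (Y₁ b - Y₁ a) - (Y₂ b - Y₂ a) := by
          simp only [hvdef]
          abel
        rw [hd, inner_sub_left, real_inner_comm (Y₁ b - Y₁ a) ξ,
          real_inner_comm (Y₂ b - Y₂ a) ξ]
      have hsplit : ⟪v b, ξ⟫ = ⟪v a, ξ⟫ + ⟪v b - v a, ξ⟫ := by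
        rw [← inner_add_left]
        congr 1
        abel
      calc F (v b) = ⟪v b, ξ⟫ := hξeq
        _ ≤ ⟪v a, ξ⟫ := by rw [hsplit, hvdiff]; linarith
        _ ≤ F (v a) := hFle (v a) ξ hξD
    -- iterate over a fine partition of [s₀, tstar]
    set Kn : ℕ := ⌈(tstar - s₀) / η⌉₊ with hKdef
    have hKpos : 0 < Kn := Nat.ceil_pos.mpr (div_pos (by linarith) hη)
    have hKpos' : (0:ℝ) < (Kn:ℝ) := by exact_mod_cast hKpos
    set step : ℝ := (tstar - s₀) / Kn with hstepdef
    have hsteppos : 0 < step := div_pos (by linarith) hKpos'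
    have hstepη : step ≤ η := by
      rw [hstepdef, div_le_iff₀ hKpos']
      have h6 := Nat.le_ceil ((tstar - s₀) / η)
      rw [div_le_iff₀ hη] at h6
      rw [← hKdef] at h6
      linarith
    have hiter : ∀ k : ℕ, k ≤ Kn → F (v (s₀ + (k:ℝ) * step)) ≤ M / 2 := by
      intro k
      induction k with
      | zero => intro _; simpa using hgs₀
      | succ m ih =>
        intro hm
        have hm' : m ≤ Kn := le_trans (Nat.le_succ m) hm
        have hmK : ((m:ℝ) + 1) ≤ (Kn:ℝ) := by exact_mod_cast hm
        set a : ℝ := s₀ + (m:ℝ) * step with hadef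
        have hbeq : s₀ + ((m+1:ℕ):ℝ) * step = a + step := by
          push_cast
          ring
        rw [hbeq]
        have ha0 : 0 ≤ a := by
          have : (0:ℝ) ≤ (m:ℝ) * step := mul_nonneg (Nat.cast_nonneg m) hsteppos.le
          linarith [hs₀mem.1]
        have hab : a < a + step := by linarith
        have hbtstar : a + step ≤ tstar := by
          have h7 : a + step = s₀ + ((m:ℝ) + 1) * step := by rw [hadef]; ring
          have h8 : ((m:ℝ) + 1) * step ≤ (Kn:ℝ) * step :=
            mul_le_mul_of_nonneg_right hmK hsteppos.le
          have h9 : (Kn:ℝ) * step = tstar - s₀ := by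
            rw [hstepdef]
            field_simp
          linarith
        have hbT : a + step ≤ T := le_trans hbtstar htstar.2
        have hbs₀ : s₀ < a + step := by
          have : (0:ℝ) ≤ (m:ℝ) * step := mul_nonneg (Nat.cast_nonneg m) hsteppos.le
          rw [hadef]
          linarith
        have hMb := hafter (a + step) hbs₀ hbtstar
        have hdec := hstep a (a + step) ha0 hab hbT (by linarith) hMb
        exact le_trans hdec (ih hm')
    have hfin := hiter Kn (le_refl Kn)
    have hKstep : s₀ + (Kn:ℝ) * step = tstar := by
      rw [hstepdef]
      field_simp
      ring
    rw [hKstep] at hfin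
    rw [← hMdef] at hfin
    linarith
  -- conclude
  apply supNorm_le_of hT
  intro t ht
  have h1 : ‖w t‖ ≤ ‖u t‖ + ‖v t‖ := by
    rw [hwuv t ht.1]
    exact norm_add_le _ _
  have h2 := hFnorm (v t)
  have h3 := Mclaim t ht
  have h4 : ‖v t‖ ≤ R * (2 * U / δ) := by
    have := mul_le_mul_of_nonneg_left h3 hRpos.le
    linarith
  have h5 : ‖u t‖ ≤ U := hUb t ht
  have h6 : R * (2 * U / δ) = 2 * R / δ * U := by
    field_simp
  calc ‖w t‖ ≤ U + R * (2 * U / δ) := by linarith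
    _ = (1 + 2 * R / δ) * U := by rw [h6]; ring
end
end

section
/- Let U ∈ (0,∞] and let Z : [0,U) → G be continuous and satisfy condition (4) of the boundary jitter property on [0,U). Suppose 0 ≤ S < T < U are such that Z(T) ∈ N* and I(Z(t)) ⊊ I(Z(T)) for all t ∈ [S,T). Then there exists a sequence S = ξ₀ < s₁ ≤ ξ₁ < s₂ ≤ ξ₂ < ⋯ < T with ξ_j → T as j → ∞ such that for each j ≥ 1: Z(ξ_j) ∈ ∂G, ⋃_{t∈[ξ_{j−1},s_j)} I(Z(t)) ⊆ I(Z(ξ_{j−1})), and ⋃_{t∈[s_j,ξ_j]} I(Z(t)) ⊆ I(Z(ξ_j)). -/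
open scoped RealInnerProductSpace ENNReal NNReal
open Filter Topology Set MeasureTheory

noncomputable section

lemma frontier_of_active {J N : ℕ} (n : Fin N → EucSp J) (c : Fin N → ℝ)
    (hn : ∀ i, ‖n i‖ = 1) (x : EucSp J) (hx : x ∈ Gset n c)
    (hne : (ISet n c x).Nonempty) : x ∈ frontier (Gset n c) := by
  obtain ⟨i, hi⟩ := hne
  have hclosed : IsClosed (Gset n c) := by
    have : Gset n c = ⋂ i, (fun y => ⟪y, n i⟫) ⁻¹' (Ici (c i)) := by
      ext y; simp [Gset, mem_iInter]
    rw [this]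
    exact isClosed_iInter fun i =>
      (isClosed_Ici.preimage (Continuous.inner continuous_id continuous_const))
  rw [hclosed.frontier_eq]
  refine ⟨hx, fun hint => ?_⟩
  obtain ⟨ε, hε, hball⟩ := Metric.isOpen_iff.1 isOpen_interior x hint
  have hy : x - (ε/2) • n i ∈ Metric.ball x ε := by
    simp only [Metric.mem_ball, dist_eq_norm, sub_sub_cancel_left, norm_neg, norm_smul,
      hn i, Real.norm_eq_abs, mul_one, abs_of_pos (by linarith : (0:ℝ) < ε/2)]
    linarith
  have hyG : x - (ε/2) • n i ∈ Gset n c := interior_subset (hball hy)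
  have := hyG i
  rw [inner_sub_left, real_inner_smul_left, real_inner_self_eq_norm_sq, hn i, hi] at this
  nlinarith

lemma stepLemma {J N : ℕ} (n : Fin N → EucSp J) (c : Fin N → ℝ) (Z : ℝ → EucSp J)
    (T : ℝ) (hT : 0 < T)
    (hZc : ∀ k : Fin N, ContinuousOn (fun t => ⟪Z t, n k⟫) (Icc 0 T))
    (i0 : Fin N)
    (hjit : ∀ δ : ℝ, 0 < δ → δ < T → ∃ σ ∈ Ioo (T - δ) T, ISet n c (Z σ) = {i0})
    (a : ℝ) (ha0 : 0 ≤ a) (haT : a < T) (ε : ℝ) (hε : 0 < ε) :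
    ∃ b s : ℝ, a < s ∧ s ≤ b ∧ b < T ∧ (ISet n c (Z b)).Nonempty ∧
      (∀ t ∈ Ico a s, ISet n c (Z t) ⊆ ISet n c (Z a)) ∧
      (∀ t ∈ Icc s b, ISet n c (Z t) ⊆ ISet n c (Z b)) ∧
      (∀ u, b < u → u ≤ T - ε →
        ¬ ∃ s', a < s' ∧ s' ≤ u ∧ (∀ t ∈ Ico a s', ISet n c (Z t) ⊆ ISet n c (Z a)) ∧
          (∀ t ∈ Icc s' u, ISet n c (Z t) ⊆ ISet n c (Z u))) := by
  set δ : ℝ := min ε (T - a) / 2 with hδdef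
  have hδpos : 0 < δ := by
    have : 0 < min ε (T - a) := lt_min hε (by linarith)
    positivity
  have hδe : δ ≤ ε / 2 := by
    have := min_le_left ε (T - a); rw [hδdef]; linarith
  have hδa : δ ≤ (T - a) / 2 := by
    have := min_le_right ε (T - a); rw [hδdef]; linarith
  have hδT : δ < T := by linarith
  obtain ⟨σ, ⟨hσ1, hσT⟩, hIσ⟩ := hjit δ hδpos hδT
  have haσ : a < σ := by linarith
  have hσε : T - ε < σ := by linarith
  -- the bad set
  set B : Set ℝ := {t | t ∈ Icc a σ ∧ ¬ ISet n c (Z t) ⊆ ISet n c (Z a)} with hBdef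
  have hBclosed : IsClosed B := by
    have hBeq : B = ⋃ k ∈ {k : Fin N | k ∉ ISet n c (Z a)},
        (Icc a σ ∩ (fun t => ⟪Z t, n k⟫) ⁻¹' {c k}) := by
      ext t
      simp only [hBdef, mem_setOf_eq, mem_iUnion, mem_inter_iff, mem_preimage,
        mem_singleton_iff, not_subset, exists_prop]
      constructor
      · rintro ⟨htI, k, hk1, hk2⟩; exact ⟨k, hk2, htI, hk1⟩
      · rintro ⟨k, hk2, htI, hk1⟩; exact ⟨htI, k, hk1, hk2⟩
    rw [hBeq]
    refine Set.Finite.isClosed_biUnion (toFinite _) (fun k _ => ?_)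
    refine ContinuousOn.preimage_isClosed_of_isClosed ?_ isClosed_Icc isClosed_singleton
    exact (hZc k).mono (Icc_subset_Icc ha0 (le_of_lt hσT))
  have haB : a ∉ B := fun h => h.2 (subset_refl _)
  have hgood : ∀ t, a ≤ t → t ≤ σ → t ∉ B → ISet n c (Z t) ⊆ ISet n c (Z a) := by
    intro t h1 h2 h3
    by_contra hc
    exact h3 ⟨⟨h1, h2⟩, hc⟩
  -- the set of reachable endpoints
  set V : Set ℝ := {u | u ∈ Ioc a σ ∧ ∃ s, (a < s ∧ s ≤ u) ∧
      (∀ t ∈ Ico a s, ISet n c (Z t) ⊆ ISet n c (Z a)) ∧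
      (∀ t ∈ Icc s u, ISet n c (Z t) ⊆ ISet n c (Z u))} with hVdef
  have hVbdd : BddAbove V := ⟨σ, fun u hu => hu.1.2⟩
  -- V is nonempty
  obtain ⟨η1, hη1, hball⟩ := Metric.isOpen_iff.1 hBclosed.isOpen_compl a haB
  have hVne : V.Nonempty := by
    refine ⟨min (a + η1 / 2) σ, ⟨lt_min (by linarith) haσ, min_le_right _ _⟩,
      min (a + η1 / 2) σ, ⟨lt_min (by linarith) haσ, le_rfl⟩, ?_, ?_⟩
    · intro t ht
      refine hgood t ht.1 (le_trans (le_of_lt ht.2) (min_le_right _ _)) (hball ?_)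
      have ht2 : t < a + η1 / 2 := lt_of_lt_of_le ht.2 (min_le_left _ _)
      simp only [Metric.mem_ball, Real.dist_eq, abs_lt]
      constructor <;> linarith [ht.1]
    · intro t ht
      have : t = min (a + η1 / 2) σ := le_antisymm ht.2 ht.1
      rw [this]
  set L : ℝ := sSup V with hLdef
  have hLσ : L ≤ σ := csSup_le hVne (fun u hu => hu.1.2)
  have haL : a < L := by
    obtain ⟨u, hu⟩ := hVne
    exact lt_of_lt_of_le hu.1.1 (le_csSup hVbdd hu)
  have hLT : L < T := lt_of_le_of_lt hLσ hσT
  have hL0T : L ∈ Icc (0:ℝ) T := ⟨le_trans ha0 (le_of_lt haL), le_of_lt hLT⟩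
  have hmemV : ∀ u ∈ V, u ≤ L := fun u hu => le_csSup hVbdd hu
  -- key closedness-limit fact: if some bad point s' lies in (a, t] and k is active at t < L,
  -- and V has no maximum at L, then k is active at L
  have hlim : ∀ s' t (k : Fin N), a < s' → ¬ ISet n c (Z s') ⊆ ISet n c (Z a) →
      s' ≤ t → t < L → k ∈ ISet n c (Z t) → (∀ u ∈ V, u < L) → k ∈ ISet n c (Z L) := by
    intro s' t k has' hs'bad hs't htL hk hVlt
    have hat : a < t := lt_of_lt_of_le has' hs't
    have hseq : ∀ m : ℕ, ∃ u, u ∈ V ∧ max t (L - 1 / (m + 1)) < u := by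
      intro m
      have hmax : max t (L - 1 / (m + 1)) < L := by
        refine max_lt htL ?_
        have : (0:ℝ) < 1 / (m + 1) := by positivity
        linarith
      obtain ⟨u, huV, hu⟩ := exists_lt_of_lt_csSup hVne hmax
      exact ⟨u, huV, hu⟩
    choose uu huuV huu using hseq
    have hk_at : ∀ m, k ∈ ISet n c (Z (uu m)) := by
      intro m
      obtain ⟨-, sm, ⟨hsm1, hsm2⟩, hc1, hc2⟩ := huuV m
      have htu : t < uu m := lt_of_le_of_lt (le_max_left _ _) (huu m)
      have hsmt : sm ≤ s' := by
        by_contra hst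
        push_neg at hst
        exact hs'bad (hc1 s' ⟨le_of_lt has', hst⟩)
      exact hc2 t ⟨le_trans hsmt hs't, le_of_lt htu⟩ hk
    -- pass to the limit
    have huuL : Tendsto uu atTop (𝓝 L) := by
      have hlow : Tendsto (fun m : ℕ => L - 1 / ((m : ℝ) + 1)) atTop (𝓝 L) := by
        have : Tendsto (fun m : ℕ => 1 / ((m : ℝ) + 1)) atTop (𝓝 0) := tendsto_one_div_add_atTop_nhds_zero_nat
        have h2 := (tendsto_const_nhds (x := L) (f := atTop (α := ℕ))).sub this
        simpa using h2
      refine tendsto_of_tendsto_of_tendsto_of_le_of_le hlow tendsto_const_nhds ?_ ?_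
      · intro m; exact le_of_lt (lt_of_le_of_lt (le_max_right _ _) (huu m))
      · intro m; exact le_of_lt (hVlt (uu m) (huuV m))
    have huuIcc : ∀ m, uu m ∈ Icc (0:ℝ) T := by
      intro m
      have h1 : a < uu m := (huuV m).1.1
      exact ⟨le_trans ha0 (le_of_lt h1), le_trans (huuV m).1.2 (le_of_lt hσT)⟩
    have hcont := ((hZc k) L hL0T).tendsto
    have hcomp : Tendsto (fun m => ⟪Z (uu m), n k⟫) atTop (𝓝 ⟪Z L, n k⟫) := by
      refine hcont.comp ?_
      exact tendsto_nhdsWithin_of_tendsto_nhds_of_eventually_within _ huuL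
        (Eventually.of_forall huuIcc)
    have hconst : ∀ m, ⟪Z (uu m), n k⟫ = c k := fun m => hk_at m
    rw [show (fun m => ⟪Z (uu m), n k⟫) = (fun _ : ℕ => c k) from funext hconst] at hcomp
    exact tendsto_nhds_unique hcomp tendsto_const_nhds
  -- L belongs to V
  have hLV : L ∈ V := by
    by_contra hLV
    have hVlt : ∀ u ∈ V, u < L := fun u hu => lt_of_le_of_ne (hmemV u hu) (fun h => hLV (h ▸ hu))
    set BL : Set ℝ := B ∩ Icc a L with hBLdef
    by_cases hBL : BL.Nonempty
    · -- there is a bad time at or before L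
      have hBLclosed : IsClosed BL := hBclosed.inter isClosed_Icc
      have hBLbdd : BddBelow BL := ⟨a, fun t ht => ht.2.1⟩
      set s' : ℝ := sInf BL with hs'def
      have hs'mem : s' ∈ BL := hBLclosed.csInf_mem hBL hBLbdd
      have has' : a < s' := lt_of_le_of_ne hs'mem.2.1 (fun h => haB (h ▸ hs'mem.1))
      have hfirst : ∀ t ∈ Ico a s', ISet n c (Z t) ⊆ ISet n c (Z a) := by
        intro t ht
        refine hgood t ht.1 (le_trans (le_of_lt (lt_of_lt_of_le ht.2 hs'mem.2.2)) hLσ) ?_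
        intro htB
        exact absurd (csInf_le hBLbdd ⟨htB, ht.1, le_trans (le_of_lt ht.2) hs'mem.2.2⟩)
          (not_le.2 ht.2)
      rcases eq_or_lt_of_le hs'mem.2.2 with hsL | hsL
      · -- s' = L : witness s := L
        refine hLV ⟨⟨haL, hLσ⟩, L, ⟨haL, le_rfl⟩, ?_, ?_⟩
        · intro t ht
          rw [← hsL] at ht
          exact hfirst t ht
        · intro t ht
          have : t = L := le_antisymm ht.2 ht.1
          rw [this]
      · -- s' < L : witness s := s'
        refine hLV ⟨⟨haL, hLσ⟩, s', ⟨has', le_of_lt hsL⟩, hfirst, ?_⟩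
        intro t ht k hk
        rcases eq_or_lt_of_le ht.2 with h | h
        · rwa [h] at hk
        · exact hlim s' t k has' hs'mem.1.2 ht.1 h hk hVlt
    · -- no bad time in [a, L]
      rw [Set.not_nonempty_iff_eq_empty] at hBL
      have hnoB : ∀ t, a ≤ t → t ≤ L → t ∉ B := by
        intro t h1 h2 htB
        exact absurd (show t ∈ BL from ⟨htB, h1, h2⟩) (by rw [hBL]; exact notMem_empty t)
      -- then we can go up to σ or at least past L, contradiction with sSup
      by_cases hBne : B.Nonempty
      · have hBbdd : BddBelow B := ⟨a, fun t ht => ht.1.1⟩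
        set m : ℝ := sInf B with hmdef
        have hmmem : m ∈ B := hBclosed.csInf_mem hBne hBbdd
        have hLm : L < m := by
          by_contra h
          push_neg at h
          exact hnoB m hmmem.1.1 h hmmem
        have hmV : m ∈ V := by
          refine ⟨⟨lt_trans haL hLm, hmmem.1.2⟩, m, ⟨lt_trans haL hLm, le_rfl⟩, ?_, ?_⟩
          · intro t ht
            refine hgood t ht.1 (le_trans (le_of_lt ht.2) hmmem.1.2) ?_
            intro htB
            exact absurd (csInf_le hBbdd htB) (not_le.2 ht.2)
          · intro t ht
            have : t = m := le_antisymm ht.2 ht.1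
            rw [this]
        exact absurd (hmemV m hmV) (not_le.2 hLm)
      · have hσV : σ ∈ V := by
          refine ⟨⟨haσ, le_rfl⟩, σ, ⟨haσ, le_rfl⟩, ?_, ?_⟩
          · intro t ht
            refine hgood t ht.1 (le_of_lt ht.2) (fun htB => hBne ⟨t, htB⟩)
          · intro t ht
            have : t = σ := le_antisymm ht.2 ht.1
            rw [this]
        have hσL : σ ≤ L := hmemV σ hσV
        have hLe : L = σ := le_antisymm hLσ hσL
        exact hLV (hLe ▸ hσV)
  -- extract the witness for L
  obtain ⟨⟨_, _⟩, sL, ⟨hsL1, hsL2⟩, hC1, hC2⟩ := hLV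
  refine ⟨L, sL, hsL1, hsL2, hLT, ?_, hC1, hC2, ?_⟩
  · -- nonemptiness of the active set at L
    rcases eq_or_lt_of_le hLσ with hLeq | hLlt
    · rw [hLeq, hIσ]; exact ⟨i0, rfl⟩
    · -- L < σ : there must be a bad time at or before L
      have hBL : (B ∩ Icc a L).Nonempty := by
        by_contra hBL
        rw [Set.not_nonempty_iff_eq_empty] at hBL
        have hnoB : ∀ t, a ≤ t → t ≤ L → t ∉ B := by
          intro t h1 h2 htB
          exact absurd (show t ∈ B ∩ Icc a L from ⟨htB, h1, h2⟩)
            (by rw [hBL]; exact notMem_empty t)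
        by_cases hBne : B.Nonempty
        · have hBbdd : BddBelow B := ⟨a, fun t ht => ht.1.1⟩
          have hmmem : sInf B ∈ B := hBclosed.csInf_mem hBne hBbdd
          have hLm : L < sInf B := by
            by_contra h
            push_neg at h
            exact hnoB _ hmmem.1.1 h hmmem
          have hmV : sInf B ∈ V := by
            refine ⟨⟨lt_trans haL hLm, hmmem.1.2⟩, sInf B, ⟨lt_trans haL hLm, le_rfl⟩, ?_, ?_⟩
            · intro t ht
              refine hgood t ht.1 (le_trans (le_of_lt ht.2) hmmem.1.2) ?_
              intro htB
              exact absurd (csInf_le hBbdd htB) (not_le.2 ht.2)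
            · intro t ht
              have : t = sInf B := le_antisymm ht.2 ht.1
              rw [this]
          exact absurd (hmemV _ hmV) (not_le.2 hLm)
        · have hσV : σ ∈ V := by
            refine ⟨⟨haσ, le_rfl⟩, σ, ⟨haσ, le_rfl⟩, ?_, ?_⟩
            · intro t ht
              exact hgood t ht.1 (le_of_lt ht.2) (fun htB => hBne ⟨t, htB⟩)
            · intro t ht
              have : t = σ := le_antisymm ht.2 ht.1
              rw [this]
          exact absurd (hmemV σ hσV) (not_le.2 hLlt)
      have hBLclosed : IsClosed (B ∩ Icc a L) := hBclosed.inter isClosed_Icc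
      have hBLbdd : BddBelow (B ∩ Icc a L) := ⟨a, fun t ht => ht.2.1⟩
      have hs'mem : sInf (B ∩ Icc a L) ∈ B ∩ Icc a L := hBLclosed.csInf_mem hBL hBLbdd
      obtain ⟨k, hk1, -⟩ := Set.not_subset.1 hs'mem.1.2
      have hsLs' : sL ≤ sInf (B ∩ Icc a L) := by
        by_contra h
        push_neg at h
        exact hs'mem.1.2 (hC1 _ ⟨hs'mem.2.1, h⟩)
      exact ⟨k, hC2 _ ⟨hsLs', hs'mem.2.2⟩ hk1⟩
  · -- maximality
    intro u hLu huε ⟨s', h1, h2, h3, h4⟩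
    have huV : u ∈ V := ⟨⟨lt_trans haL hLu, le_of_lt (lt_of_le_of_lt huε hσε)⟩,
      s', ⟨h1, h2⟩, h3, h4⟩
    exact absurd (hmemV u huV) (not_le.2 hLu)

/-- **Lemma (oscillation structure before hitting the nonsmooth boundary).**
If `Z : [0,U) → G` is continuous and satisfies condition (4) of the boundary jitter property,
`Z T ∈ N*` and `I(Z t) ⊊ I(Z T)` on `[S,T)`, then there is a nested increasing sequence
`S = ξ₀ < s₁ ≤ ξ₁ < s₂ ≤ ξ₂ < ⋯ < T` with `ξ_j → T`, `Z ξ_j ∈ ∂G`, and the stated inclusions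
of active index sets.  (Here `s j` plays the role of `s_{j+1}` and `ξ (j+1)` of `ξ_{j+1}`.) -/
theorem statement7 (J N : ℕ) (hJ : 1 ≤ J) (hN : 1 ≤ N)
    (n d : Fin N → EucSp J) (c : Fin N → ℝ)
    (hn : ∀ i, ‖n i‖ = 1) (hdn : ∀ i, ⟪d i, n i⟫ = 1)
    (hGne : (Gset n c).Nonempty)
    (U : ℝ≥0∞) (hU : 0 < U)
    (Z : ℝ → EucSp J)
    (hZcont : ContinuousOn Z {t : ℝ | 0 ≤ t ∧ ENNReal.ofReal t < U})
    (hZG : ∀ t : ℝ, 0 ≤ t → ENNReal.ofReal t < U → Z t ∈ Gset n c)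
    -- condition (4) of the boundary jitter property on `[0,U)`
    (hjit4 : ∀ t : ℝ, 0 < t → ENNReal.ofReal t < U → Z t ∈ Nstar n c →
      ∀ i ∈ ISet n c (Z t), ∀ δ : ℝ, 0 < δ → δ < t →
        ∃ s ∈ Ioo (t - δ) t, ISet n c (Z s) = {i})
    (S T : ℝ) (hS : 0 ≤ S) (hST : S < T) (hTU : ENNReal.ofReal T < U)
    (hZT : Z T ∈ Nstar n c)
    (hstrict : ∀ t ∈ Ico S T, ISet n c (Z t) ⊂ ISet n c (Z T)) :
    ∃ ξ s : ℕ → ℝ,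
      ξ 0 = S ∧
      (∀ j : ℕ, ξ j < s j ∧ s j ≤ ξ (j + 1) ∧ ξ (j + 1) < T) ∧
      Tendsto ξ atTop (𝓝 T) ∧
      ∀ j : ℕ,
        Z (ξ (j + 1)) ∈ frontier (Gset n c) ∧
        (∀ t ∈ Ico (ξ j) (s j), ISet n c (Z t) ⊆ ISet n c (Z (ξ j))) ∧
        (∀ t ∈ Icc (s j) (ξ (j + 1)), ISet n c (Z t) ⊆ ISet n c (Z (ξ (j + 1)))) := by
  have hT0 : 0 < T := lt_of_le_of_lt hS hST
  have hsub : Icc (0:ℝ) T ⊆ {t : ℝ | 0 ≤ t ∧ ENNReal.ofReal t < U} := fun t ht =>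
    ⟨ht.1, lt_of_le_of_lt (ENNReal.ofReal_le_ofReal ht.2) hTU⟩
  have hZc : ∀ k : Fin N, ContinuousOn (fun t => ⟪Z t, n k⟫) (Icc 0 T) := fun k =>
    (Continuous.inner continuous_id continuous_const).comp_continuousOn (hZcont.mono hsub)
  have hIne : (ISet n c (Z T)).Nonempty := by
    rcases hZT with ⟨-, hcard⟩
    exact Set.nonempty_of_ncard_ne_zero (by omega)
  obtain ⟨i0, hi0⟩ := hIne
  have hjitT : ∀ δ : ℝ, 0 < δ → δ < T → ∃ σ ∈ Ioo (T - δ) T, ISet n c (Z σ) = {i0} :=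
    fun δ h1 h2 => hjit4 T hT0 hTU hZT i0 hi0 δ h1 h2
  -- choice function for the recursive construction
  have key : ∀ a : ℝ, S ≤ a → a < T → ∀ j : ℕ, ∃ p : ℝ × ℝ,
      a < p.2 ∧ p.2 ≤ p.1 ∧ p.1 < T ∧ (ISet n c (Z p.1)).Nonempty ∧
      (∀ t ∈ Ico a p.2, ISet n c (Z t) ⊆ ISet n c (Z a)) ∧
      (∀ t ∈ Icc p.2 p.1, ISet n c (Z t) ⊆ ISet n c (Z p.1)) ∧
      (∀ u, p.1 < u → u ≤ T - (1/2)^j →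
        ¬ ∃ s', a < s' ∧ s' ≤ u ∧ (∀ t ∈ Ico a s', ISet n c (Z t) ⊆ ISet n c (Z a)) ∧
          (∀ t ∈ Icc s' u, ISet n c (Z t) ⊆ ISet n c (Z u))) := by
    intro a h1 h2 j
    obtain ⟨b, s, hs⟩ := stepLemma n c Z T hT0 hZc i0 hjitT a (le_trans hS h1) h2
      ((1/2)^j) (by positivity)
    exact ⟨(b, s), hs⟩
  choose F hF using key
  set Φ : {a : ℝ // S ≤ a ∧ a < T} → ℕ → {a : ℝ // S ≤ a ∧ a < T} := fun p j =>
    ⟨(F p.1 p.2.1 p.2.2 j).1, le_of_lt (lt_of_le_of_lt p.2.1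
        (lt_of_lt_of_le (hF p.1 p.2.1 p.2.2 j).1 (hF p.1 p.2.1 p.2.2 j).2.1)),
      (hF p.1 p.2.1 p.2.2 j).2.2.1⟩ with hΦdef
  obtain ⟨ξs, hξs0, hξsrec⟩ : ∃ ξs : ℕ → {a : ℝ // S ≤ a ∧ a < T},
      ξs 0 = ⟨S, le_rfl, hST⟩ ∧ ∀ j, ξs (j+1) = Φ (ξs j) j :=
    ⟨fun j => Nat.rec ⟨S, le_rfl, hST⟩ (fun j p => Φ p j) j, rfl, fun j => rfl⟩
  set ξ : ℕ → ℝ := fun j => (ξs j).1 with hξdef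
  set s : ℕ → ℝ := fun j => (F (ξs j).1 (ξs j).2.1 (ξs j).2.2 j).2 with hsdef
  have hξ0 : ξ 0 = S := by show (ξs 0).1 = S; rw [hξs0]
  have hb : ∀ j, ξ (j+1) = (F (ξs j).1 (ξs j).2.1 (ξs j).2.2 j).1 := by
    intro j; show (ξs (j+1)).1 = _; rw [hξsrec j]
  have hspec : ∀ j : ℕ,
      ξ j < s j ∧ s j ≤ ξ (j+1) ∧ ξ (j+1) < T ∧ (ISet n c (Z (ξ (j+1)))).Nonempty ∧
      (∀ t ∈ Ico (ξ j) (s j), ISet n c (Z t) ⊆ ISet n c (Z (ξ j))) ∧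
      (∀ t ∈ Icc (s j) (ξ (j+1)), ISet n c (Z t) ⊆ ISet n c (Z (ξ (j+1)))) ∧
      (∀ u, ξ (j+1) < u → u ≤ T - (1/2)^j →
        ¬ ∃ s', ξ j < s' ∧ s' ≤ u ∧
          (∀ t ∈ Ico (ξ j) s', ISet n c (Z t) ⊆ ISet n c (Z (ξ j))) ∧
          (∀ t ∈ Icc s' u, ISet n c (Z t) ⊆ ISet n c (Z u))) := by
    intro j
    have := hF (ξs j).1 (ξs j).2.1 (ξs j).2.2 j
    rw [← hb j] at this
    exact this
  have hmono : StrictMono ξ := strictMono_nat_of_lt_succ (fun j =>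
    lt_of_lt_of_le (hspec j).1 (hspec j).2.1)
  have hξT : ∀ j, ξ j < T := fun j => (ξs j).2.2
  have hξS : ∀ j, S ≤ ξ j := fun j => (ξs j).2.1
  have hbdd : BddAbove (Set.range ξ) := ⟨T, by rintro x ⟨j, rfl⟩; exact le_of_lt (hξT j)⟩
  set M : ℝ := ⨆ j, ξ j with hMdef
  have hM : Tendsto ξ atTop (𝓝 M) := tendsto_atTop_ciSup hmono.monotone hbdd
  have hξM : ∀ j, ξ j ≤ M := fun j => le_ciSup hbdd j
  have hMT : M ≤ T := ciSup_le (fun j => le_of_lt (hξT j))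
  -- M = T
  have hMeq : M = T := by
    by_contra hne
    have hMT' : M < T := lt_of_le_of_ne hMT hne
    have hM0T : M ∈ Icc (0:ℝ) T := ⟨le_trans hS (le_trans (hξS 0) (hξM 0)), hMT⟩
    -- stabilization of active indices near M
    have hstab : ∃ j1 : ℕ, ∀ k : Fin N, ∀ t, ξ j1 ≤ t → t ≤ M →
        k ∈ ISet n c (Z t) → k ∈ ISet n c (Z M) := by
      have hk : ∀ k : Fin N, ∃ jk : ℕ, ∀ t, ξ jk ≤ t → t ≤ M →
          k ∈ ISet n c (Z t) → k ∈ ISet n c (Z M) := by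
        intro k
        by_cases hR : ∀ j : ℕ, ∃ t, ξ j ≤ t ∧ t ≤ M ∧ k ∈ ISet n c (Z t)
        · choose tt htt1 htt2 htt3 using hR
          have httM : Tendsto tt atTop (𝓝 M) :=
            tendsto_of_tendsto_of_tendsto_of_le_of_le hM tendsto_const_nhds htt1 htt2
          have httIcc : ∀ j, tt j ∈ Icc (0:ℝ) T := fun j =>
            ⟨le_trans hS (le_trans (hξS j) (htt1 j)), le_trans (htt2 j) hMT⟩
          have hcont := ((hZc k) M hM0T).tendsto
          have hcomp : Tendsto (fun j => ⟪Z (tt j), n k⟫) atTop (𝓝 ⟪Z M, n k⟫) :=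
            hcont.comp (tendsto_nhdsWithin_of_tendsto_nhds_of_eventually_within _ httM
              (Eventually.of_forall httIcc))
          have hconst : ∀ j, ⟪Z (tt j), n k⟫ = c k := fun j => htt3 j
          rw [show (fun j => ⟪Z (tt j), n k⟫) = (fun _ : ℕ => c k) from funext hconst] at hcomp
          have : k ∈ ISet n c (Z M) := tendsto_nhds_unique hcomp tendsto_const_nhds
          exact ⟨0, fun t _ _ _ => this⟩
        · push_neg at hR
          obtain ⟨j, hj⟩ := hR
          exact ⟨j, fun t h1 h2 h3 => absurd h3 (hj t h1 h2)⟩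
      choose jk hjk using hk
      exact ⟨Finset.univ.sup jk, fun k t h1 h2 h3 =>
        hjk k t (le_trans (hmono.monotone (Finset.le_sup (Finset.mem_univ k))) h1) h2 h3⟩
    obtain ⟨j1, hj1⟩ := hstab
    obtain ⟨j2, hj2⟩ := exists_pow_lt_of_lt_one (show (0:ℝ) < T - M by linarith)
      (show (1:ℝ)/2 < 1 by norm_num)
    set j : ℕ := max j1 j2 with hjdef
    have hεj : (1/2:ℝ)^j ≤ (1/2:ℝ)^j2 :=
      pow_le_pow_of_le_one (by norm_num) (by norm_num) (le_max_right _ _)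
    have hu1 : ξ (j+1) < M := lt_of_lt_of_le (hmono (Nat.lt_succ_self (j+1))) (hξM (j+2))
    have hu2 : M ≤ T - (1/2:ℝ)^j := by linarith [lt_of_le_of_lt hεj hj2]
    refine (hspec j).2.2.2.2.2.2 M hu1 hu2 ⟨s j, (hspec j).1, ?_, (hspec j).2.2.2.2.1, ?_⟩
    · exact le_trans (hspec j).2.1 (le_of_lt hu1)
    · intro t ht k hk
      have h1 : ξ j1 ≤ t :=
        le_trans (hmono.monotone (le_max_left j1 j2)) (le_trans (hspec j).1.le ht.1)
      exact hj1 k t h1 ht.2 hk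
  refine ⟨ξ, s, hξ0, fun j => ⟨(hspec j).1, (hspec j).2.1, (hspec j).2.2.1⟩, hMeq ▸ hM,
    fun j => ⟨?_, (hspec j).2.2.2.2.1, (hspec j).2.2.2.2.2.1⟩⟩
  refine frontier_of_active n c hn _ (hZG _ ?_ ?_) (hspec j).2.2.2.1
  · exact le_trans hS (hξS (j+1))
  · exact lt_of_le_of_lt (ENNReal.ofReal_le_ofReal (le_of_lt (hξT (j+1)))) hTU
end
end

section
/- Let Z : [0,∞) → G be continuous and satisfy conditions (3) and (4) of the boundary jitter property on [0,∞), suppose Z(0) ∈ N*, and let T ∈ (0,∞) be such that I(Z(t)) ⊊ I(Z(0)) for all t ∈ (0,T). Then there exists a sequence T > χ₀ > u₁ ≥ χ₁ > u₂ ≥ χ₂ > ⋯ > 0 with χ_j → 0 as j → ∞ such that Z(χ₀) lies in the interior of G and for each j ≥ 1: Z(χ_j) ∈ ∂G, ⋃_{t∈[χ_j,u_j]} I(Z(t)) ⊆ I(Z(χ_j)), and ⋃_{t∈(u_j,χ_{j−1}]} I(Z(t)) ⊆ I(Z(χ_{j−1})). -/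
open scoped RealInnerProductSpace ENNReal NNReal
open Filter Topology Set MeasureTheory

noncomputable section

section Statement8Aux

variable {J N : ℕ} {n : Fin N → EucSp J} {c : Fin N → ℝ}

lemma aux_gset_closed : IsClosed (Gset n c) := by
  have h : Gset n c = ⋂ i, {x : EucSp J | c i ≤ ⟪x, n i⟫} := by
    ext x; simp [Gset]
  rw [h]
  exact isClosed_iInter fun i =>
    isClosed_le continuous_const (continuous_id.inner continuous_const)

lemma aux_mem_interior {x : EucSp J} (hx : ∀ i, c i < ⟪x, n i⟫) :
    x ∈ interior (Gset n c) := by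
  have hopen : IsOpen {y : EucSp J | ∀ i, c i < ⟪y, n i⟫} := by
    have h : {y : EucSp J | ∀ i, c i < ⟪y, n i⟫} = ⋂ i, {y : EucSp J | c i < ⟪y, n i⟫} := by
      ext y; simp
    rw [h]
    exact isOpen_iInter_of_finite fun i =>
      isOpen_lt continuous_const (continuous_id.inner continuous_const)
  have hsub : {y : EucSp J | ∀ i, c i < ⟪y, n i⟫} ⊆ Gset n c := by
    intro y hy i
    exact le_of_lt (hy i)
  exact interior_maximal hsub hopen hx

lemma aux_mem_frontier (hn : ∀ i, ‖n i‖ = 1) {x : EucSp J} (hxG : x ∈ Gset n c)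
    {i : Fin N} (hi : ⟪x, n i⟫ = c i) : x ∈ frontier (Gset n c) := by
  rw [aux_gset_closed.frontier_eq]
  refine ⟨hxG, fun hint => ?_⟩
  rw [mem_interior_iff_mem_nhds, Metric.mem_nhds_iff] at hint
  obtain ⟨ε, hε, hball⟩ := hint
  have hy : x - (ε/2) • n i ∈ Metric.ball x ε := by
    rw [Metric.mem_ball, dist_eq_norm]
    have h0 : x - (ε/2) • n i - x = -((ε/2) • n i) := by abel
    rw [h0, norm_neg, norm_smul, hn i, mul_one, Real.norm_eq_abs,
      abs_of_pos (half_pos hε)]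
    linarith
  have hyG : x - (ε/2) • n i ∈ Gset n c := hball hy
  simp only [Gset, Set.mem_setOf_eq] at hyG
  have h2 := hyG i
  have h3 : ⟪n i, n i⟫ = 1 := by
    rw [real_inner_self_eq_norm_sq, hn i, one_pow]
  rw [inner_sub_left, real_inner_smul_left, hi, h3, mul_one] at h2
  linarith

end Statement8Aux

/-- **Lemma (oscillation structure after starting at the nonsmooth boundary).**
If a continuous `Z : [0,∞) → G` satisfies conditions (3) and (4) of the boundary jitter
property, `Z 0 ∈ N*` and `I(Z t) ⊊ I(Z 0)` on `(0,T)`, then there is a nested decreasing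
sequence `T > χ₀ > u₁ ≥ χ₁ > u₂ ≥ χ₂ > ⋯ > 0` with `χ_j → 0`, `Z χ₀ ∈ G°`, `Z χ_j ∈ ∂G`
for `j ≥ 1`, and the stated inclusions of active index sets.
(Here `u j` plays the role of `u_{j+1}` and `χ (j+1)` of `χ_{j+1}`.) -/
theorem statement8 (J N : ℕ) (hJ : 1 ≤ J) (hN : 1 ≤ N)
    (n d : Fin N → EucSp J) (c : Fin N → ℝ)
    (hn : ∀ i, ‖n i‖ = 1) (hdn : ∀ i, ⟪d i, n i⟫ = 1)
    (hGne : (Gset n c).Nonempty)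
    (Z : ℝ → EucSp J)
    (hZcont : ContinuousOn Z (Ici 0))
    (hZG : ∀ t : ℝ, 0 ≤ t → Z t ∈ Gset n c)
    -- condition (3) of the boundary jitter property on `[0,∞)`
    (hjit3 : Z 0 ∈ Nstar n c →
      ∀ i ∈ ISet n c (Z 0), ∀ δ : ℝ, 0 < δ →
        ∃ u ∈ Ioo (0:ℝ) δ, ISet n c (Z u) = {i})
    -- condition (4) of the boundary jitter property on `[0,∞)`
    (hjit4 : ∀ t : ℝ, 0 < t → Z t ∈ Nstar n c →
      ∀ i ∈ ISet n c (Z t), ∀ δ : ℝ, 0 < δ → δ < t →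
        ∃ s ∈ Ioo (t - δ) t, ISet n c (Z s) = {i})
    (hZ0 : Z 0 ∈ Nstar n c)
    (T : ℝ) (hT : 0 < T)
    (hstrict : ∀ t ∈ Ioo (0:ℝ) T, ISet n c (Z t) ⊂ ISet n c (Z 0)) :
    ∃ χ u : ℕ → ℝ,
      χ 0 < T ∧
      (∀ j : ℕ, u j < χ j ∧ χ (j + 1) ≤ u j ∧ 0 < χ (j + 1)) ∧
      Tendsto χ atTop (𝓝 0) ∧
      Z (χ 0) ∈ interior (Gset n c) ∧
      ∀ j : ℕ,
        Z (χ (j + 1)) ∈ frontier (Gset n c) ∧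
        (∀ t ∈ Icc (χ (j + 1)) (u j), ISet n c (Z t) ⊆ ISet n c (Z (χ (j + 1)))) ∧
        (∀ t ∈ Ioc (u j) (χ j), ISet n c (Z t) ⊆ ISet n c (Z (χ j))) := by
  classical
  haveI : Nonempty (Fin N) := ⟨⟨0, hN⟩⟩
  have toEq : ∀ {x : EucSp J} {i : Fin N}, i ∈ ISet n c x → ⟪x, n i⟫ = c i :=
    fun h => h
  have toMem : ∀ {x : EucSp J} {i : Fin N}, ⟪x, n i⟫ = c i → i ∈ ISet n c x :=
    fun h => h
  -- basic continuity facts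
  have hgC : ∀ i : Fin N, ContinuousOn (fun t => ⟪Z t, n i⟫) (Ici 0) := fun i =>
    hZcont.inner continuousOn_const
  have hKclosed : ∀ (i : Fin N) (p q : ℝ), 0 ≤ p →
      IsClosed {t : ℝ | t ∈ Icc p q ∧ ⟪Z t, n i⟫ = c i} := by
    intro i p q hp
    have h1 : ContinuousOn (fun t => ⟪Z t, n i⟫) (Icc p q) :=
      (hgC i).mono fun t ht => le_trans hp ht.1
    have hset : {t : ℝ | t ∈ Icc p q ∧ ⟪Z t, n i⟫ = c i}
        = Icc p q ∩ (fun t => ⟪Z t, n i⟫) ⁻¹' {c i} := by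
      ext t
      simp [Set.mem_preimage, Set.mem_inter_iff, Set.mem_setOf_eq]
    rw [hset]
    exact h1.preimage_isClosed_of_isClosed isClosed_Icc isClosed_singleton
  have hlim : ∀ (i : Fin N) (w : ℝ) (s : ℕ → ℝ), (∀ k, 0 ≤ s k) →
      Tendsto s atTop (𝓝 w) → (∀ k, ⟪Z (s k), n i⟫ = c i) →
      w ∈ Ici (0:ℝ) → ⟪Z w, n i⟫ = c i := by
    intro i w s hs hts hact hw
    have hcw : Tendsto (fun t => ⟪Z t, n i⟫) (𝓝[Ici 0] w) (𝓝 (⟪Z w, n i⟫)) :=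
      (hgC i) w hw
    have h1 : Tendsto (fun k => ⟪Z (s k), n i⟫) atTop (𝓝 (⟪Z w, n i⟫)) :=
      hcw.comp (tendsto_nhdsWithin_iff.2 ⟨hts, Filter.Eventually.of_forall hs⟩)
    have h2 : Tendsto (fun k => ⟪Z (s k), n i⟫) atTop (𝓝 (c i)) := by
      simp only [hact]
      exact tendsto_const_nhds
    exact tendsto_nhds_unique h1 h2
  -- two distinct active indices at time 0
  obtain ⟨i1, hi1, i2, hi2, hne12⟩ : ∃ a ∈ ISet n c (Z 0), ∃ b ∈ ISet n c (Z 0), a ≠ b := by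
    rw [← Set.one_lt_ncard (Set.toFinite _)]
    exact lt_of_lt_of_le one_lt_two hZ0.2
  -- Step A : existence of an interior time χ₀ ∈ (0, T)
  obtain ⟨v, hv, hvI⟩ := hjit3 hZ0 i1 hi1 T hT
  obtain ⟨v', hv', hv'I⟩ := hjit3 hZ0 i2 hi2 v hv.1
  have hi1v : ⟪Z v, n i1⟫ = c i1 := toEq (by rw [hvI]; exact rfl)
  set W : Set ℝ := {t : ℝ | t ∈ Icc v' v ∧ ⟪Z t, n i1⟫ = c i1} with hWdef
  have hWclosed : IsClosed W := hKclosed i1 v' v hv'.1.le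
  have hWne : W.Nonempty := ⟨v, ⟨hv'.2.le, le_refl v⟩, hi1v⟩
  have hWcompact : IsCompact W :=
    isCompact_Icc.of_isClosed_subset hWclosed fun t ht => ht.1
  set w := sInf W with hwdef
  have hwW : w ∈ W := hWcompact.sInf_mem hWne
  have hwv' : v' < w := by
    rcases lt_or_eq_of_le hwW.1.1 with h | h
    · exact h
    · exfalso
      have hmem : i1 ∈ ISet n c (Z v') := toMem (by rw [h]; exact hwW.2)
      rw [hv'I] at hmem
      exact hne12 (Set.mem_singleton_iff.1 hmem)
  have hnotbefore : ∀ t, v' ≤ t → t < w → ⟪Z t, n i1⟫ ≠ c i1 := by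
    intro t ht1 ht2 hact
    have hmem : t ∈ W := ⟨⟨ht1, le_trans ht2.le hwW.1.2⟩, hact⟩
    exact absurd (csInf_le hWcompact.bddBelow hmem) (not_le.2 ht2)
  have hstepA : ∃ t, t ∈ Ioo v' w ∧ ISet n c (Z t) = ∅ := by
    by_contra hcon
    push_neg at hcon
    set M : Set ℝ := ⋃ i'' ∈ {i : Fin N | i ≠ i1},
      {t : ℝ | t ∈ Icc v' w ∧ ⟪Z t, n i''⟫ = c i''} with hMdef
    have hMclosed : IsClosed M :=
      Set.Finite.isClosed_biUnion (Set.toFinite _) fun i'' _ => hKclosed i'' v' w hv'.1.le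
    have hsubM : Ioo v' w ⊆ M := by
      intro t ht
      obtain ⟨i'', hi''⟩ := hcon t ht
      have hact : ⟪Z t, n i''⟫ = c i'' := toEq hi''
      have hnei : i'' ∈ {i : Fin N | i ≠ i1} := by
        intro h
        subst h
        exact hnotbefore t ht.1.le ht.2 hact
      exact Set.mem_biUnion hnei ⟨⟨ht.1.le, ht.2.le⟩, hact⟩
    have hwM : w ∈ M := by
      have h1 : w ∈ closure (Ioo v' w) := by
        rw [closure_Ioo (ne_of_lt hwv')]
        exact ⟨hwv'.le, le_rfl⟩
      have h2 := closure_mono hsubM h1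
      rwa [hMclosed.closure_eq] at h2
    obtain ⟨i'', hi''ne, hi''w⟩ : ∃ i'', i'' ≠ i1 ∧ ⟪Z w, n i''⟫ = c i'' := by
      simp only [hMdef, Set.mem_iUnion, Set.mem_setOf_eq] at hwM
      obtain ⟨i'', hne, _, hact⟩ := hwM
      exact ⟨i'', hne, hact⟩
    have hw0 : 0 < w := lt_trans hv'.1 hwv'
    have hZwN : Z w ∈ Nstar n c := by
      refine ⟨aux_mem_frontier hn (hZG w hw0.le) hwW.2, ?_⟩
      exact (Set.one_lt_ncard (Set.toFinite _)).2
        ⟨i1, toMem hwW.2, i'', toMem hi''w, hi''ne.symm⟩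
    obtain ⟨s, hs, hsI⟩ := hjit4 w hw0 hZwN i1 (toMem hwW.2) (w - v') (sub_pos.2 hwv')
      (by linarith [hv'.1])
    have hs' : s ∈ Ioo v' w := by
      have h0 : w - (w - v') = v' := by ring
      rwa [h0] at hs
    apply hnotbefore s hs'.1.le hs'.2
    exact toEq (by rw [hsI]; exact rfl)
  obtain ⟨χ0, hχ0mem, hχ0I⟩ := hstepA
  have hχ0pos : 0 < χ0 := lt_trans hv'.1 hχ0mem.1
  have hχ0T : χ0 < T := lt_of_lt_of_le (lt_of_lt_of_le hχ0mem.2 hwW.1.2) hv.2.le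
  -- Step B : the recursive step
  have step : ∀ a : ℝ, 0 < a → a < T →
      ∃ p : ℝ × ℝ, 0 < p.2 ∧ p.2 ≤ p.1 ∧ p.1 < a ∧
        (ISet n c (Z p.2)).Nonempty ∧
        (∀ t ∈ Icc p.2 p.1, ISet n c (Z t) ⊆ ISet n c (Z p.2)) ∧
        (∀ t ∈ Ioc p.1 a, ISet n c (Z t) ⊆ ISet n c (Z a)) ∧
        (∀ s : ℝ, 0 < s → s ≤ p.1 →
          (∀ t ∈ Icc s p.1, ISet n c (Z t) ⊆ ISet n c (Z s)) → p.2 ≤ s) := by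
    intro a ha haT
    have hstr := hstrict a ⟨ha, haT⟩
    obtain ⟨iw, hiw0, hiwa⟩ : ∃ i, i ∈ ISet n c (Z 0) ∧ i ∉ ISet n c (Z a) := by
      obtain ⟨x, hx1, hx2⟩ := Set.exists_of_ssubset hstr
      exact ⟨x, hx1, hx2⟩
    have hiwa' : iw ∈ {i : Fin N | i ∉ ISet n c (Z a)} := hiwa
    set B : Set ℝ := ⋃ i ∈ {i : Fin N | i ∉ ISet n c (Z a)},
      {t : ℝ | t ∈ Icc 0 a ∧ ⟪Z t, n i⟫ = c i} with hBdef
    have hBclosed : IsClosed B :=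
      Set.Finite.isClosed_biUnion (Set.toFinite _) fun i _ => hKclosed i 0 a le_rfl
    have hBsub : B ⊆ Icc 0 a := by
      intro t ht
      simp only [hBdef, Set.mem_iUnion, Set.mem_setOf_eq] at ht
      obtain ⟨i, _, h1, _⟩ := ht
      exact h1
    have hB0 : (0:ℝ) ∈ B := Set.mem_biUnion hiwa' ⟨⟨le_rfl, ha.le⟩, toEq hiw0⟩
    have hBne : B.Nonempty := ⟨0, hB0⟩
    have hBcompact : IsCompact B := isCompact_Icc.of_isClosed_subset hBclosed hBsub
    set u' := sSup B with hu'def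
    have huB : u' ∈ B := hBcompact.sSup_mem hBne
    obtain ⟨i0, hi0a, hi0act⟩ : ∃ i, i ∉ ISet n c (Z a) ∧ ⟪Z u', n i⟫ = c i := by
      simp only [hBdef, Set.mem_iUnion, Set.mem_setOf_eq] at huB
      obtain ⟨i, hia, _, hact⟩ := huB
      exact ⟨i, hia, hact⟩
    have hu'mem : u' ∈ Icc 0 a := hBsub huB
    have hu'a : u' < a := by
      rcases lt_or_eq_of_le hu'mem.2 with h | h
      · exact h
      · exact absurd (toMem (h ▸ hi0act)) hi0a
    have hu'0 : 0 ≤ u' := hu'mem.1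
    have hIocA : ∀ t ∈ Ioc u' a, ISet n c (Z t) ⊆ ISet n c (Z a) := by
      intro t ht i hit
      by_contra hita
      have hita' : i ∈ {i : Fin N | i ∉ ISet n c (Z a)} := hita
      have hmem : t ∈ B :=
        Set.mem_biUnion hita' ⟨⟨le_trans hu'0 ht.1.le, ht.2⟩, toEq hit⟩
      have hle : t ≤ u' := le_csSup hBcompact.bddAbove hmem
      exact absurd hle (not_le.2 ht.1)
    have hu'pos : 0 < u' := by
      by_contra h
      have hu0 : u' = 0 := le_antisymm (not_lt.1 h) hu'0
      obtain ⟨vv, hvv, hvvI⟩ := hjit3 hZ0 iw hiw0 a ha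
      have hiwvv : ⟪Z vv, n iw⟫ = c iw := toEq (by rw [hvvI]; exact rfl)
      have hmem : vv ∈ B := Set.mem_biUnion hiwa' ⟨⟨hvv.1.le, hvv.2.le⟩, hiwvv⟩
      have h2 : vv ≤ u' := le_csSup hBcompact.bddAbove hmem
      rw [hu0] at h2
      exact absurd h2 (not_le.2 hvv.1)
    -- the set C and its infimum
    set C : Set ℝ := {s : ℝ | 0 < s ∧ s ≤ u' ∧
      ∀ t ∈ Icc s u', ISet n c (Z t) ⊆ ISet n c (Z s)} with hCdef
    have hu'C : u' ∈ C := by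
      refine ⟨hu'pos, le_rfl, fun t ht => ?_⟩
      have heq : t = u' := le_antisymm ht.2 ht.1
      rw [heq]
    have hCne : C.Nonempty := ⟨u', hu'C⟩
    have hCbdd : BddBelow C := ⟨0, fun s hs => hs.1.le⟩
    have hCmono : ∀ s ∈ C, ∀ s' ∈ C, s' ≤ s →
        ISet n c (Z s) ⊆ ISet n c (Z s') := by
      intro s hs s' hs' hle
      exact hs'.2.2 s ⟨hle, hs.2.1⟩
    set m := sInf C with hmdef
    have hmle : ∀ s ∈ C, m ≤ s := fun s hs => csInf_le hCbdd hs
    have hm0 : 0 ≤ m := le_csInf hCne fun s hs => hs.1.le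
    have hmpos : 0 < m := by
      by_contra h
      have hm00 : m = 0 := le_antisymm (not_lt.1 h) hm0
      have hkey : ∀ i : Fin N, ∃ s, s ∈ C ∧ (i ∈ ISet n c (Z 0) → i ∈ ISet n c (Z s)) := by
        intro i
        by_cases hi : i ∈ ISet n c (Z 0)
        · obtain ⟨vv, hvv, hvvI⟩ := hjit3 hZ0 i hi u' hu'pos
          have hlt : sInf C < vv := by
            rw [← hmdef, hm00]
            exact hvv.1
          obtain ⟨s, hsC, hslt⟩ := exists_lt_of_csInf_lt hCne hlt
          refine ⟨s, hsC, fun _ => ?_⟩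
          apply hsC.2.2 vv ⟨hslt.le, hvv.2.le⟩
          rw [hvvI]
          exact rfl
        · exact ⟨u', hu'C, fun hmem => absurd hmem hi⟩
      choose σ hσC hσ using hkey
      have hinfpos : sInf C < Finset.univ.inf' Finset.univ_nonempty σ := by
        rw [← hmdef, hm00, Finset.lt_inf'_iff]
        exact fun i _ => (hσC i).1
      obtain ⟨s', hs'C, hs'lt⟩ := exists_lt_of_csInf_lt hCne hinfpos
      have hsub : ISet n c (Z 0) ⊆ ISet n c (Z s') := by
        intro i hi
        have h1 : i ∈ ISet n c (Z (σ i)) := hσ i hi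
        have h2 : s' ≤ σ i :=
          le_trans hs'lt.le (Finset.inf'_le σ (Finset.mem_univ i))
        exact hCmono (σ i) (hσC i) s' hs'C h2 h1
      have hstr' := hstrict s' ⟨hs'C.1, lt_trans (lt_of_le_of_lt hs'C.2.1 hu'a) haT⟩
      exact hstr'.not_subset hsub
    have hmu' : m ≤ u' := hmle u' hu'C
    have hmC : m ∈ C := by
      refine ⟨hmpos, hmu', ?_⟩
      intro t ht i hit
      rcases eq_or_lt_of_le ht.1 with heq | hlt
      · rwa [heq]
      · have hseq : ∀ k : ℕ, ∃ s, s ∈ C ∧ s < min t (m + 1/((k:ℝ)+1)) := by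
          intro k
          have hlt2 : sInf C < min t (m + 1/((k:ℝ)+1)) := by
            rw [← hmdef]
            apply lt_min hlt
            have hpos : (0:ℝ) < 1/((k:ℝ)+1) := by positivity
            linarith
          exact exists_lt_of_csInf_lt hCne hlt2
        choose s hsC hslt using hseq
        have hsge : ∀ k, m ≤ s k := fun k => hmle _ (hsC k)
        have hactk : ∀ k, ⟪Z (s k), n i⟫ = c i := by
          intro k
          have h1 : t ∈ Icc (s k) u' :=
            ⟨(lt_of_lt_of_le (hslt k) (min_le_left _ _)).le, ht.2⟩
          exact toEq ((hsC k).2.2 t h1 hit)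
        have hto : Tendsto s atTop (𝓝 m) := by
          have h1 : Tendsto (fun k : ℕ => m + 1/((k:ℝ)+1)) atTop (𝓝 m) := by
            have h2 : Tendsto (fun k : ℕ => 1 / ((k : ℝ) + 1)) atTop (𝓝 0) :=
              tendsto_one_div_add_atTop_nhds_zero_nat
            have h3 := (tendsto_const_nhds (x := m) (f := atTop (α := ℕ))).add h2
            simpa using h3
          exact tendsto_of_tendsto_of_tendsto_of_le_of_le tendsto_const_nhds h1 hsge
            fun k => (lt_of_lt_of_le (hslt k) (min_le_right _ _)).le
        exact toMem (hlim i m s (fun k => le_trans hmpos.le (hsge k)) hto hactk hmpos.le)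
    refine ⟨(u', m), hmpos, hmu', hu'a, ?_, hmC.2.2, hIocA,
      fun s hs1 hs2 hs3 => hmle s ⟨hs1, hs2, hs3⟩⟩
    exact ⟨i0, hmC.2.2 u' ⟨hmu', le_rfl⟩ (toMem hi0act)⟩
  choose! F hF using step
  set χ : ℕ → ℝ := fun j => Nat.rec (motive := fun _ => ℝ) χ0 (fun _ prev => (F prev).2) j
    with hχdef
  set u : ℕ → ℝ := fun j => (F (χ j)).1 with hudef
  have hχzero : χ 0 = χ0 := rfl
  have hχsucc : ∀ j, χ (j+1) = (F (χ j)).2 := fun j => rfl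
  have husucc : ∀ j, u j = (F (χ j)).1 := fun j => rfl
  have hkey : ∀ j, 0 < χ j ∧ χ j < T := by
    intro j
    induction j with
    | zero => exact ⟨hχ0pos, hχ0T⟩
    | succ k ih =>
      obtain ⟨h1, h2, h3, _⟩ := hF (χ k) ih.1 ih.2
      refine ⟨?_, ?_⟩
      · rw [hχsucc k]; exact h1
      · rw [hχsucc k]; exact lt_trans (lt_of_le_of_lt h2 h3) ih.2
  have hQ := fun j => hF (χ j) (hkey j).1 (hkey j).2
  have hdec : ∀ j, χ (j+1) < χ j := by
    intro j
    rw [hχsucc j]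
    exact lt_of_le_of_lt (hQ j).2.1 (hQ j).2.2.1
  have hule : ∀ j, χ (j+1) ≤ u j := by
    intro j
    rw [hχsucc j, husucc j]
    exact (hQ j).2.1
  have hult : ∀ j, u j < χ j := by
    intro j
    rw [husucc j]
    exact (hQ j).2.2.1
  have hanti : StrictAnti χ := strictAnti_nat_of_succ_lt hdec
  set L := ⨅ j, χ j with hLdef
  have hbdd : BddBelow (Set.range χ) := ⟨0, by rintro x ⟨j, rfl⟩; exact (hkey j).1.le⟩
  have htend : Tendsto χ atTop (𝓝 L) := tendsto_atTop_ciInf hanti.antitone hbdd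
  have hLle : ∀ j, L ≤ χ j := fun j => ciInf_le hbdd j
  have hL0 : 0 ≤ L := le_ciInf fun j => (hkey j).1.le
  have hLeq : L = 0 := by
    by_contra hL0'
    have hLpos : 0 < L := lt_of_le_of_ne hL0 (Ne.symm hL0')
    have hev : ∀ᶠ t in 𝓝 L, ∀ i : Fin N, i ∉ ISet n c (Z L) → c i < ⟪Z t, n i⟫ := by
      rw [eventually_all]
      intro i
      by_cases hi : i ∈ ISet n c (Z L)
      · exact Filter.Eventually.of_forall fun t h => absurd hi h
      · have hlt : c i < ⟪Z L, n i⟫ :=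
          lt_of_le_of_ne (hZG L hL0 i) fun h => hi (toMem h.symm)
        have hZL : ContinuousAt Z L := hZcont.continuousAt (Ici_mem_nhds hLpos)
        have hCA : ContinuousAt (fun t => ⟪Z t, n i⟫) L :=
          ((continuous_id.inner continuous_const).continuousAt).comp hZL
        have h4 := hCA (Ioi_mem_nhds hlt)
        filter_upwards [h4] with t ht _
        exact ht
    obtain ⟨ε, hε, hP⟩ := Metric.eventually_nhds_iff.1 hev
    obtain ⟨j, hj⟩ := (htend.eventually_lt_const (lt_add_of_pos_right L hε)).exists
    have hsubLt : ∀ t ∈ Icc L (u j), ISet n c (Z t) ⊆ ISet n c (Z L) := by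
      intro t ht i hit
      by_contra hi
      have hdist : dist t L < ε := by
        rw [Real.dist_eq, abs_of_nonneg (sub_nonneg.2 ht.1)]
        have h1 : t ≤ u j := ht.2
        have h2 : u j < χ j := hult j
        linarith
      exact absurd (toEq hit) (ne_of_gt (hP hdist i hi))
    have hLuj : L ≤ u j := le_trans (hLle (j+1)) (hule j)
    have hle1 : (F (χ j)).2 ≤ L := (hQ j).2.2.2.2.2.2 L hLpos (husucc j ▸ hLuj)
      (by rw [← husucc j]; exact hsubLt)
    rw [← hχsucc j] at hle1
    have h2 : L < χ (j+1) := lt_of_le_of_lt (hLle (j+2)) (hdec (j+1))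
    exact absurd hle1 (not_le.2 h2)
  have hZχ0int : Z (χ 0) ∈ interior (Gset n c) := by
    rw [hχzero]
    apply aux_mem_interior
    intro i
    refine lt_of_le_of_ne (hZG _ hχ0pos.le i) ?_
    intro h
    have hmem : i ∈ ISet n c (Z χ0) := toMem h.symm
    rw [hχ0I] at hmem
    exact hmem
  refine ⟨χ, u, hχzero ▸ hχ0T,
    fun j => ⟨hult j, hule j, lt_of_lt_of_le (hkey (j+1)).1 le_rfl⟩,
    hLeq ▸ htend, hZχ0int, fun j => ⟨?_, ?_, ?_⟩⟩
  · obtain ⟨i, hi⟩ := (hQ j).2.2.2.1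
    have hi' : i ∈ ISet n c (Z (χ (j+1))) := by rw [hχsucc j]; exact hi
    exact aux_mem_frontier hn (hZG _ (hkey (j+1)).1.le) (toEq hi')
  · intro t ht
    rw [hχsucc j]
    rw [hχsucc j, husucc j] at ht
    exact (hQ j).2.2.2.2.1 t ht
  · intro t ht
    rw [husucc j] at ht
    exact (hQ j).2.2.2.2.2.1 t ht
end
end

section
/- Suppose the ESP data satisfies Assumption (B). Then there exists κ_Λ ∈ (0,∞) such that for every continuous X with X(0) ∈ G and every solution (Z,Y) of the ESP for X: if (φ₁,η₁) solves the DP associated with Z for ψ₁ ∈ D_r and (φ₂,η₂) solves the DP associated with Z for ψ₂ ∈ D_r, then ‖φ₁ − φ₂‖_T ≤ κ_Λ‖ψ₁ − ψ₂‖_T for every T ∈ [0,∞). In particular, for each ψ ∈ D_r there is at most one solution of the DP associated with Z for ψ. -/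
open scoped RealInnerProductSpace ENNReal NNReal
open Filter Topology Set MeasureTheory

noncomputable section

section DPAux

variable {J N : ℕ}

lemma coneGen_subset_span (s : Set (EucSp J)) :
    coneGen s ⊆ (Submodule.span ℝ s : Set (EucSp J)) := by
  rintro y ⟨k, r, v, hr, hv, rfl⟩
  exact Submodule.sum_mem _ fun i _ =>
    Submodule.smul_mem _ _ (Submodule.subset_span (hv i))

lemma gauge_le_inv_mul_norm {B : Set (EucSp J)} {ρ : ℝ} (hρ : 0 < ρ)
    (hρB : Metric.closedBall (0 : EucSp J) ρ ⊆ B) (y : EucSp J) :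
    gauge B y ≤ ρ⁻¹ * ‖y‖ := by
  rcases eq_or_ne y 0 with rfl | hy
  · simp [gauge_zero]
  · have hny : 0 < ‖y‖ := norm_pos_iff.2 hy
    have hr : 0 < ρ⁻¹ * ‖y‖ := by positivity
    refine gauge_le_of_mem hr.le ?_
    rw [mem_smul_set_iff_inv_smul_mem₀ hr.ne']
    apply hρB
    have hcalc : (ρ⁻¹ * ‖y‖)⁻¹ * ‖y‖ = ρ := by field_simp
    rw [Metric.mem_closedBall, dist_zero_right, norm_smul, Real.norm_eq_abs,
      abs_of_pos (inv_pos.2 hr), hcalc]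

lemma norm_le_mul_gauge {B : Set (EucSp J)} {ρ R : ℝ} (hρ : 0 < ρ)
    (hρB : Metric.closedBall (0 : EucSp J) ρ ⊆ B) (hR : 0 < R)
    (hBR : B ⊆ Metric.closedBall (0 : EucSp J) R) (y : EucSp J) :
    ‖y‖ ≤ R * gauge B y := by
  rcases eq_or_ne y 0 with rfl | hy
  · simp [gauge_zero]
  have hny : 0 < ‖y‖ := norm_pos_iff.2 hy
  rw [← div_le_iff₀' hR]
  unfold gauge
  apply le_csInf
  · refine ⟨ρ⁻¹ * ‖y‖, by positivity, ?_⟩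
    rw [mem_smul_set_iff_inv_smul_mem₀ (by positivity)]
    apply hρB
    have hcalc : (ρ⁻¹ * ‖y‖)⁻¹ * ‖y‖ = ρ := by field_simp
    rw [Metric.mem_closedBall, dist_zero_right, norm_smul, Real.norm_eq_abs,
      abs_of_pos (by positivity), hcalc]
  · rintro b ⟨hb, m, hm, hbm⟩
    have hmR : ‖m‖ ≤ R := by
      have := hBR hm
      rwa [Metric.mem_closedBall, dist_zero_right] at this
    rw [div_le_iff₀ hR, ← hbm, norm_smul, Real.norm_eq_abs, abs_of_pos hb]
    exact mul_le_mul_of_nonneg_left hmR hb.le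

/-- The key geometric consequence of Assumption (B): if all active normals are nearly
orthogonal (relative to the gauge of `B`) to `x`, then adding any vector in the span of the
corresponding reflection directions cannot decrease the gauge of `x`. -/
lemma kgl_gauge_le (n d : Fin N → EucSp J) {δ : ℝ} (hδ : 0 < δ) {B : Set (EucSp J)}
    (hBconv : Convex ℝ B) (hB0 : (0 : EucSp J) ∈ interior B)
    (hBcond : ∀ i : Fin N, ∀ z ∈ frontier B, |⟪z, n i⟫| < δ →
      ∀ ν : EucSp J, ‖ν‖ = 1 → (∀ y ∈ B, 0 ≤ ⟪ν, y - z⟫) → ⟪ν, d i⟫ = 0)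
    (I : Set (Fin N)) (x w : EucSp J) (hx0 : 0 < gauge B x)
    (hxI : ∀ i ∈ I, |⟪x, n i⟫| < δ * gauge B x)
    (hw : w ∈ Submodule.span ℝ (d '' I)) :
    gauge B x ≤ gauge B (x + w) := by
  have hBnhds : B ∈ 𝓝 (0 : EucSp J) := mem_interior_iff_mem_nhds.1 hB0
  set r := gauge B x with hrdef
  set z := r⁻¹ • x with hzdef
  have hz1 : gauge B z = 1 := by
    rw [hzdef, gauge_smul_of_nonneg (inv_nonneg.2 hx0.le), smul_eq_mul,
      inv_mul_cancel₀ hx0.ne']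
  have hzfr : z ∈ frontier B := (gauge_eq_one_iff_mem_frontier hBconv hBnhds).1 hz1
  have hzint : z ∉ interior B := by
    intro h
    have := (gauge_lt_one_iff_mem_interior hBconv hBnhds).2 h
    rw [hz1] at this
    exact lt_irrefl 1 this
  obtain ⟨f, hf⟩ := geometric_hahn_banach_open_point (hBconv.interior) isOpen_interior hzint
  have hfle : ∀ y ∈ B, f y ≤ f z := by
    intro y hy
    have hseq : ∀ k : ℕ, f ((1 - ((k : ℝ) + 1)⁻¹) • y) < f z := by
      intro k
      have hk1 : (0:ℝ) < ((k : ℝ) + 1)⁻¹ := by positivity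
      have hone : (1:ℝ) ≤ (k : ℝ) + 1 := by
        have : (0:ℝ) ≤ (k : ℝ) := Nat.cast_nonneg k
        linarith
      have hmul : ((k : ℝ) + 1)⁻¹ * ((k : ℝ) + 1) = 1 := inv_mul_cancel₀ (by positivity)
      have hk2 : ((k : ℝ) + 1)⁻¹ ≤ 1 := by
        calc ((k : ℝ) + 1)⁻¹ = ((k : ℝ) + 1)⁻¹ * 1 := by rw [mul_one]
          _ ≤ ((k : ℝ) + 1)⁻¹ * ((k : ℝ) + 1) := by
              exact mul_le_mul_of_nonneg_left hone hk1.le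
          _ = 1 := hmul
      have hmem := hBconv.combo_interior_closure_mem_interior hB0 (subset_closure hy) hk1
        (by linarith : (0:ℝ) ≤ 1 - ((k : ℝ) + 1)⁻¹) (by ring)
      rw [smul_zero, zero_add] at hmem
      exact hf _ hmem
    have h1 : Tendsto (fun k : ℕ => (1 - ((k : ℝ) + 1)⁻¹)) atTop (𝓝 1) := by
      have h2 : Tendsto (fun k : ℕ => (1:ℝ) - 1 / ((k : ℝ) + 1)) atTop (𝓝 (1 - 0)) :=
        tendsto_const_nhds.sub tendsto_one_div_add_atTop_nhds_zero_nat
      simpa [one_div] using h2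
    have h2 : Tendsto (fun k : ℕ => (1 - ((k : ℝ) + 1)⁻¹) • y) atTop (𝓝 ((1:ℝ) • y)) :=
      h1.smul_const y
    rw [one_smul] at h2
    have hlim : Tendsto (fun k : ℕ => f ((1 - ((k : ℝ) + 1)⁻¹) • y)) atTop (𝓝 (f y)) :=
      (f.continuous.tendsto y).comp h2
    exact le_of_tendsto hlim (Eventually.of_forall fun k => (hseq k).le)
  set v := (InnerProductSpace.toDual ℝ (EucSp J)).symm f with hvdef
  have hvapp : ∀ y : EucSp J, ⟪v, y⟫ = f y := fun y => InnerProductSpace.toDual_symm_apply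
  have hfz0 : f 0 < f z := hf 0 hB0
  have hvne : v ≠ 0 := by
    intro h
    have hz0 : f z = 0 := by rw [← hvapp z, h, inner_zero_left]
    rw [map_zero] at hfz0
    rw [hz0] at hfz0
    exact lt_irrefl 0 hfz0
  have hvnorm : 0 < ‖v‖ := norm_pos_iff.2 hvne
  set ν := -(‖v‖⁻¹ • v) with hνdef
  have hν1 : ‖ν‖ = 1 := by
    rw [hνdef, norm_neg, norm_smul, Real.norm_eq_abs, abs_of_pos (inv_pos.2 hvnorm),
      inv_mul_cancel₀ hvnorm.ne']
  have hνnormal : ∀ y ∈ B, 0 ≤ ⟪ν, y - z⟫ := by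
    intro y hy
    rw [hνdef, inner_neg_left, real_inner_smul_left, inner_sub_right, hvapp, hvapp,
      neg_nonneg]
    exact mul_nonpos_of_nonneg_of_nonpos (inv_nonneg.2 (norm_nonneg _))
      (sub_nonpos.2 (hfle y hy))
  have hνd : ∀ i ∈ I, ⟪ν, d i⟫ = 0 := by
    intro i hi
    refine hBcond i z hzfr ?_ ν hν1 hνnormal
    rw [hzdef, real_inner_smul_left, abs_mul, abs_of_pos (inv_pos.2 hx0)]
    have h := hxI i hi
    rw [inv_mul_lt_iff₀ hx0]
    calc |⟪x, n i⟫| < δ * r := h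
      _ = r * δ := by ring
  have hνw : ⟪ν, w⟫ = 0 := by
    refine Submodule.span_induction ?_ ?_ ?_ ?_ hw
    · rintro y ⟨i, hi, rfl⟩
      exact hνd i hi
    · exact inner_zero_right ν
    · intro a b _ _ ha hb
      rw [inner_add_right, ha, hb, add_zero]
    · intro a b _ hb
      rw [real_inner_smul_right, hb, mul_zero]
  by_contra hcon
  push_neg at hcon
  have hy1 : gauge B (r⁻¹ • (x + w)) < 1 := by
    rw [gauge_smul_of_nonneg (inv_nonneg.2 hx0.le), smul_eq_mul]
    calc r⁻¹ * gauge B (x + w) < r⁻¹ * r := by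
          exact mul_lt_mul_of_pos_left hcon (inv_pos.2 hx0)
      _ = 1 := inv_mul_cancel₀ hx0.ne'
  have hyint : r⁻¹ • (x + w) ∈ interior B :=
    (gauge_lt_one_iff_mem_interior hBconv hBnhds).1 hy1
  obtain ⟨ε, hε, hball⟩ := Metric.mem_nhds_iff.1 (mem_interior_iff_mem_nhds.1 hyint)
  set y2 := r⁻¹ • (x + w) - (ε / 2) • ν with hy2def
  have hy2B : y2 ∈ B := by
    apply hball
    rw [Metric.mem_ball, dist_eq_norm]
    have hsub : y2 - r⁻¹ • (x + w) = -((ε / 2) • ν) := by rw [hy2def]; abel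
    rw [hsub, norm_neg, norm_smul, Real.norm_eq_abs, abs_of_pos (by linarith), hν1, mul_one]
    linarith
  have h1 := hνnormal y2 hy2B
  have h2 : ⟪ν, r⁻¹ • (x + w) - z⟫ = 0 := by
    have h4 : r⁻¹ • (x + w) - z = r⁻¹ • w := by rw [hzdef, smul_add]; abel
    rw [h4, real_inner_smul_right, hνw, mul_zero]
  have h5 : y2 - z = (r⁻¹ • (x + w) - z) - (ε / 2) • ν := by rw [hy2def]; abel
  have h3 : ⟪ν, y2 - z⟫ = -(ε / 2) := by
    rw [h5, inner_sub_right, h2, real_inner_smul_right, zero_sub,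
      real_inner_self_eq_norm_mul_norm, hν1]
    ring
  rw [h3] at h1
  linarith

/-- A function which is right-continuous with left limits is bounded on `[0, T]`. -/
lemma bdd_of_DrOn (f : ℝ → EucSp J) (hf : DrOn f ⊤) (T : ℝ) :
    ∃ C : ℝ, ∀ s ∈ Icc (0:ℝ) T, ‖f s‖ ≤ C := by
  have key : ∀ (g L : EucSp J), ‖g - L‖ < 1 → ‖g‖ ≤ ‖L‖ + 1 := by
    intro g L h
    calc ‖g‖ = ‖g - L + L‖ := by rw [sub_add_cancel]
      _ ≤ ‖g - L‖ + ‖L‖ := norm_add_le _ _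
      _ ≤ ‖L‖ + 1 := by linarith
  have hloc : ∀ t : ℝ, ∃ ε : ℝ, 0 < ε ∧ ∃ C, ∀ s ∈ Icc (0:ℝ) T, |s - t| < ε → ‖f s‖ ≤ C := by
    intro t
    rcases lt_or_ge t 0 with ht | ht
    · refine ⟨-t, by linarith, 0, fun s hs hst => ?_⟩
      have h1 : -t ≤ s - t := by linarith [hs.1]
      have := le_abs_self (s - t)
      linarith
    rcases lt_or_ge T t with ht2 | ht2
    · refine ⟨t - T, by linarith, 0, fun s hs hst => ?_⟩
      have h1 : t - T ≤ t - s := by linarith [hs.2]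
      have := neg_abs_le (s - t)
      linarith [abs_sub_comm s t ▸ hst]
    · -- 0 ≤ t ≤ T
      have hr := hf.1 t ht (by simp)
      obtain ⟨ε₁, hε₁, hb₁⟩ := Metric.tendsto_nhdsWithin_nhds.1 hr 1 one_pos
      by_cases ht0 : 0 < t
      · obtain ⟨L, hL⟩ := hf.2 t ht0 (by simp)
        obtain ⟨ε₂, hε₂, hb₂⟩ := Metric.tendsto_nhdsWithin_nhds.1 hL 1 one_pos
        refine ⟨min ε₁ ε₂, lt_min hε₁ hε₂, ‖f t‖ + ‖L‖ + 1, fun s hs hst => ?_⟩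
        rcases lt_trichotomy s t with h | h | h
        · have hd : dist s t < ε₂ := by
            rw [Real.dist_eq]
            exact lt_of_lt_of_le hst (min_le_right _ _)
          have := hb₂ (mem_Iio.2 h) hd
          rw [dist_eq_norm] at this
          have := key (f s) L this
          linarith [norm_nonneg (f t)]
        · rw [h]
          linarith [norm_nonneg L]
        · have hd : dist s t < ε₁ := by
            rw [Real.dist_eq]
            exact lt_of_lt_of_le hst (min_le_left _ _)
          have := hb₁ (mem_Ioi.2 h) hd
          rw [dist_eq_norm] at this
          have := key (f s) (f t) this
          linarith [norm_nonneg L]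
      · refine ⟨ε₁, hε₁, ‖f t‖ + 1, fun s hs hst => ?_⟩
        have hts : t ≤ s := le_trans (le_of_not_gt ht0) hs.1
        rcases eq_or_lt_of_le hts with h | h
        · rw [← h]
          linarith
        · have hd : dist s t < ε₁ := by rwa [Real.dist_eq]
          have := hb₁ (mem_Ioi.2 h) hd
          rw [dist_eq_norm] at this
          exact key (f s) (f t) this
  choose ε hε C hC using hloc
  obtain ⟨F, -, hF⟩ := isCompact_Icc.elim_nhds_subcover (fun t => Metric.ball t (ε t))
    (fun t _ => Metric.ball_mem_nhds t (hε t))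
  refine ⟨∑ t ∈ F, |C t|, fun s hs => ?_⟩
  obtain ⟨t, htF, hst⟩ := mem_iUnion₂.1 (hF hs)
  have hst' : |s - t| < ε t := by rw [← Real.dist_eq]; exact Metric.mem_ball.1 hst
  calc ‖f s‖ ≤ C t := hC t s hs hst'
    _ ≤ |C t| := le_abs_self _
    _ ≤ ∑ u ∈ F, |C u| := Finset.single_le_sum (f := fun u => |C u|) (fun u _ => abs_nonneg _) htF

/-- The main quantitative estimate: any solution of the derivative problem satisfies a
uniform bound in terms of the input. -/
lemma dp_main (n d : Fin N → EucSp J) (c : Fin N → ℝ) (hn : ∀ i, ‖n i‖ = 1)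
    {δ : ℝ} (hδ : 0 < δ) {B : Set (EucSp J)}
    (hBconv : Convex ℝ B) (hB0 : (0 : EucSp J) ∈ interior B)
    (hBcond : ∀ i : Fin N, ∀ z ∈ frontier B, |⟪z, n i⟫| < δ →
      ∀ ν : EucSp J, ‖ν‖ = 1 → (∀ y ∈ B, 0 ≤ ⟪ν, y - z⟫) → ⟪ν, d i⟫ = 0)
    {ρ R : ℝ} (hρ : 0 < ρ) (hρB : Metric.closedBall (0 : EucSp J) ρ ⊆ B)
    (hR : 0 < R) (hBR : B ⊆ Metric.closedBall (0 : EucSp J) R)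
    (Z : ℝ → EucSp J) (hZc : ContinuousOn Z (Ici 0))
    (ψ φ η : ℝ → EucSp J)
    (hηrc : ∀ t : ℝ, 0 ≤ t → Tendsto η (𝓝[>] t) (𝓝 (η t)))
    (hη0 : η 0 ∈ Submodule.span ℝ (d '' ISet n c (Z 0)))
    (hpt : ∀ t : ℝ, 0 ≤ t → φ t = ψ t + η t ∧ φ t ∈ Hset n c (Z t))
    (hinc : ∀ s t : ℝ, 0 ≤ s → s < t →
      η t - η s ∈ Submodule.span ℝ (⋃ u ∈ Ioc s t, dCone n c d (Z u)))
    (T M : ℝ) (hM : ∀ u ∈ Icc (0:ℝ) T, ‖ψ u‖ ≤ M)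
    (t₀ : ℝ) (ht₀ : t₀ ∈ Icc (0:ℝ) T) :
    ‖φ t₀‖ ≤ (2 * R / δ + R / ρ) * M := by
  by_contra hcon
  push_neg at hcon
  set A₀ := gauge B (φ t₀) with hA₀def
  have hM0 : 0 ≤ M := le_trans (norm_nonneg _) (hM t₀ ht₀)
  have hRA : ‖φ t₀‖ ≤ R * A₀ := norm_le_mul_gauge hρ hρB hR hBR _
  have hκ0 : 0 ≤ 2 * R / δ + R / ρ := by positivity
  have hRApos : 0 < R * A₀ :=
    lt_of_le_of_lt (mul_nonneg hκ0 hM0) (lt_of_lt_of_le hcon hRA)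
  have hA0nonneg : 0 ≤ A₀ := gauge_nonneg _
  have hA0pos : 0 < A₀ := by nlinarith
  have h2M : 2 * M < δ * A₀ := by
    have h1 : 2 * R / δ * M < R * A₀ := by
      nlinarith [mul_nonneg (div_nonneg hR.le hρ.le) hM0]
    have heq : 2 * R / δ * M = R * (δ⁻¹ * (2 * M)) := by field_simp
    rw [heq] at h1
    have h3 : δ⁻¹ * (2 * M) < A₀ := lt_of_mul_lt_mul_left h1 hR.le
    calc 2 * M = δ * (δ⁻¹ * (2 * M)) := by field_simp
      _ < δ * A₀ := mul_lt_mul_of_pos_left h3 hδ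
  have hMρ : M / ρ < A₀ := by
    have h1 : R / ρ * M < R * A₀ := by
      nlinarith [mul_nonneg (div_nonneg (by linarith : (0:ℝ) ≤ 2 * R) hδ.le) hM0]
    have heq : R / ρ * M = R * (M / ρ) := by ring
    rw [heq] at h1
    exact lt_of_mul_lt_mul_left h1 hR.le
  have hBnhds : B ∈ 𝓝 (0 : EucSp J) := mem_interior_iff_mem_nhds.1 hB0
  set Tset : Set ℝ := {s : ℝ | 0 ≤ s ∧ s ≤ t₀ ∧ A₀ ≤ gauge B (ψ t₀ + η s)} with hTsetdef
  have ht₀T : t₀ ∈ Tset := by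
    refine ⟨ht₀.1, le_rfl, le_of_eq ?_⟩
    rw [hA₀def, (hpt t₀ ht₀.1).1]
  have hne : Tset.Nonempty := ⟨t₀, ht₀T⟩
  have hbdd : BddBelow Tset := ⟨0, fun s hs => hs.1⟩
  set σ := sInf Tset with hσdef
  have hσ0 : 0 ≤ σ := le_csInf hne fun s hs => hs.1
  have hσt₀ : σ ≤ t₀ := csInf_le hbdd ht₀T
  have hσT : σ ∈ Tset := by
    by_contra hσnot
    have hex : ∀ k : ℕ, ∃ s', s' ∈ Tset ∧ s' < σ + ((k : ℝ) + 1)⁻¹ := fun k =>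
      exists_lt_of_csInf_lt hne (lt_add_of_pos_right σ (by positivity))
    choose sk hskT hsklt using hex
    have hskge : ∀ k, σ ≤ sk k := fun k => csInf_le hbdd (hskT k)
    have hsktend : Tendsto sk atTop (𝓝 σ) := by
      have h1 : Tendsto (fun k : ℕ => σ + ((k : ℝ) + 1)⁻¹) atTop (𝓝 (σ + 0)) :=
        tendsto_const_nhds.add (by have h := tendsto_one_div_add_atTop_nhds_zero_nat (𝕜 := ℝ); simp only [one_div] at h; exact h)
      rw [add_zero] at h1
      exact tendsto_of_tendsto_of_tendsto_of_le_of_le tendsto_const_nhds h1 hskge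
        fun k => (hsklt k).le
    have hskgt : ∀ k, σ < sk k := fun k =>
      (hskge k).lt_of_ne fun h => hσnot (by rw [h]; exact hskT k)
    have htw : Tendsto sk atTop (𝓝[>] σ) :=
      tendsto_nhdsWithin_of_tendsto_nhds_of_eventually_within _ hsktend
        (Eventually.of_forall fun k => hskgt k)
    have hηlim : Tendsto (fun k => η (sk k)) atTop (𝓝 (η σ)) := (hηrc σ hσ0).comp htw
    have hgc : Continuous fun y : EucSp J => gauge B (ψ t₀ + y) :=
      (continuous_gauge hBconv hBnhds).comp (continuous_const.add continuous_id)
    have hglim : Tendsto (fun k => gauge B (ψ t₀ + η (sk k))) atTop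
        (𝓝 (gauge B (ψ t₀ + η σ))) := (hgc.tendsto _).comp hηlim
    have hfin : A₀ ≤ gauge B (ψ t₀ + η σ) :=
      ge_of_tendsto hglim (Eventually.of_forall fun k => (hskT k).2.2)
    exact hσnot ⟨hσ0, hσt₀, hfin⟩
  have happly : ∀ σ' : ℝ, σ' ∈ Tset → ∀ w : EucSp J,
      w ∈ Submodule.span ℝ (d '' ISet n c (Z σ')) →
      A₀ ≤ gauge B (ψ t₀ + η σ' + w) := by
    intro σ' hσ' w hw
    have hφσ := hpt σ' hσ'.1
    have hxg : 0 < gauge B (ψ t₀ + η σ') := lt_of_lt_of_le hA0pos hσ'.2.2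
    refine hσ'.2.2.trans (kgl_gauge_le n d hδ hBconv hB0 hBcond
      (ISet n c (Z σ')) (ψ t₀ + η σ') w hxg ?_ hw)
    intro i hi
    have hxeq : ψ t₀ + η σ' = (ψ t₀ - ψ σ') + φ σ' := by rw [hφσ.1]; abel
    have hinner : ⟪ψ t₀ + η σ', n i⟫ = ⟪ψ t₀ - ψ σ', n i⟫ := by
      rw [hxeq, inner_add_left, hφσ.2 i hi, add_zero]
    rw [hinner]
    have hb1 : |⟪ψ t₀ - ψ σ', n i⟫| ≤ ‖ψ t₀ - ψ σ'‖ * ‖n i‖ := abs_real_inner_le_norm _ _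
    rw [hn i, mul_one] at hb1
    have hb2 : ‖ψ t₀ - ψ σ'‖ ≤ M + M := by
      have hm1 := hM t₀ ht₀
      have hm2 := hM σ' ⟨hσ'.1, le_trans hσ'.2.1 ht₀.2⟩
      calc ‖ψ t₀ - ψ σ'‖ ≤ ‖ψ t₀‖ + ‖ψ σ'‖ := norm_sub_le _ _
        _ ≤ M + M := add_le_add hm1 hm2
    have hb3 : δ * A₀ ≤ δ * gauge B (ψ t₀ + η σ') :=
      mul_le_mul_of_nonneg_left hσ'.2.2 hδ.le
    linarith
  rcases eq_or_lt_of_le hσ0 with hσeq | hσpos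
  · -- σ = 0 : subtract η 0 entirely and reach a contradiction
    have h0T : (0:ℝ) ∈ Tset := by rwa [← hσeq] at hσT
    have hk := happly 0 h0T (-(η 0)) (Submodule.neg_mem _ hη0)
    have heq : ψ t₀ + η 0 + -(η 0) = ψ t₀ := by abel
    rw [heq] at hk
    have hub : gauge B (ψ t₀) ≤ ρ⁻¹ * ‖ψ t₀‖ := gauge_le_inv_mul_norm hρ hρB _
    have hψM : ‖ψ t₀‖ ≤ M := hM t₀ ht₀
    have hfinal : A₀ ≤ M / ρ := by
      calc A₀ ≤ gauge B (ψ t₀) := hk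
        _ ≤ ρ⁻¹ * ‖ψ t₀‖ := hub
        _ ≤ ρ⁻¹ * M := mul_le_mul_of_nonneg_left hψM (inv_nonneg.2 hρ.le)
        _ = M / ρ := by rw [inv_mul_eq_div]
    linarith
  · -- σ > 0 : find a strictly earlier time in Tset, contradicting minimality
    set Bad : Set ℝ :=
      ⋃ i : Fin N, {u : ℝ | u ∈ Icc 0 σ ∧ ⟪Z u, n i⟫ = c i ∧ i ∉ ISet n c (Z σ)} with hBadDef
    have hBadsub : Bad ⊆ Icc 0 σ := by
      intro u hu
      obtain ⟨i, hi⟩ := mem_iUnion.1 hu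
      exact hi.1
    have hBadcl : IsClosed Bad := by
      apply isClosed_iUnion_of_finite
      intro i
      by_cases hi : i ∈ ISet n c (Z σ)
      · convert isClosed_empty using 1
        ext u
        simp [hi]
      · have hset : {u : ℝ | u ∈ Icc 0 σ ∧ ⟪Z u, n i⟫ = c i ∧ i ∉ ISet n c (Z σ)}
            = Icc 0 σ ∩ (fun u => ⟪Z u, n i⟫) ⁻¹' {c i} := by
          ext u
          simp [hi, and_comm]
        rw [hset]
        exact (ContinuousOn.inner (hZc.mono Icc_subset_Ici_self)
          continuousOn_const).preimage_isClosed_of_isClosed isClosed_Icc isClosed_singleton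
    obtain ⟨θ, hθ0, hθσ, hθub⟩ : ∃ θ, 0 ≤ θ ∧ θ < σ ∧ ∀ u ∈ Bad, u ≤ θ := by
      by_cases hBne : Bad.Nonempty
      · have hbddA : BddAbove Bad := ⟨σ, fun u hu => (hBadsub hu).2⟩
        have hmem := hBadcl.csSup_mem hBne hbddA
        obtain ⟨i, hIcc, hact, hnot⟩ := mem_iUnion.1 hmem
        refine ⟨sSup Bad, hIcc.1, lt_of_le_of_ne hIcc.2 fun h => hnot ?_,
          fun u hu => le_csSup hbddA hu⟩
        rw [h] at hact
        exact hact
      · exact ⟨0, le_rfl, hσpos, fun u hu => absurd ⟨u, hu⟩ hBne⟩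
    set s1 := (θ + σ) / 2 with hs1def
    have hθs : θ < s1 := by rw [hs1def]; linarith
    have hsσ : s1 < σ := by rw [hs1def]; linarith
    have hs0 : 0 ≤ s1 := by rw [hs1def]; linarith
    have hIsub : ∀ u ∈ Ioc s1 σ, ISet n c (Z u) ⊆ ISet n c (Z σ) := by
      intro u hu i hiu
      by_contra hiσ
      have huBad : u ∈ Bad := mem_iUnion.2 ⟨i, ⟨by constructor <;> [linarith [hu.1]; exact hu.2],
        hiu, hiσ⟩⟩
      have := hθub u huBad
      linarith [hu.1]
    have hwmem : η s1 - η σ ∈ Submodule.span ℝ (d '' ISet n c (Z σ)) := by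
      have h1 := hinc s1 σ hs0 hsσ
      have h2 : (⋃ u ∈ Ioc s1 σ, dCone n c d (Z u)) ⊆
          (Submodule.span ℝ (d '' ISet n c (Z σ)) : Set (EucSp J)) := by
        intro y hy
        simp only [mem_iUnion, exists_prop] at hy
        obtain ⟨u, hu, hyu⟩ := hy
        exact Submodule.span_mono (Set.image_mono (hIsub u hu))
          (coneGen_subset_span _ hyu)
      have h3 := Submodule.span_le.2 h2 h1
      simpa using Submodule.neg_mem _ h3
    have hkey := happly σ hσT (η s1 - η σ) hwmem
    have heq : ψ t₀ + η σ + (η s1 - η σ) = ψ t₀ + η s1 := by abel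
    rw [heq] at hkey
    have hs1T : s1 ∈ Tset := ⟨hs0, by linarith, hkey⟩
    have := csInf_le hbdd hs1T
    linarith

end DPAux

/-- **Theorem (Lipschitz continuity of the derivative map).**
Under Assumption (B), there is `κ_Λ ∈ (0,∞)` such that for every ESP solution `(Z,Y)` and all
DP solutions `(φ₁,η₁)`, `(φ₂,η₂)` associated with `Z` for `ψ₁, ψ₂ ∈ D_r`, we have
`‖φ₁ − φ₂‖_T ≤ κ_Λ ‖ψ₁ − ψ₂‖_T` for every `T ≥ 0`; in particular DP solutions are unique. -/
theorem statement9 (J N : ℕ) (hJ : 1 ≤ J) (hN : 1 ≤ N)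
    (n d : Fin N → EucSp J) (c : Fin N → ℝ)
    (hn : ∀ i, ‖n i‖ = 1) (hdn : ∀ i, ⟪d i, n i⟫ = 1)
    (hGne : (Gset n c).Nonempty)
    (hB : AssumptionB n d) :
    ∃ κΛ : ℝ, 0 < κΛ ∧
      ∀ X Z Y : ℝ → EucSp J, ContinuousOn X (Ici 0) → X 0 ∈ Gset n c →
        SolvesESP n c d X Z Y →
        (∀ ψ₁ ψ₂ φ₁ η₁ φ₂ η₂ : ℝ → EucSp J, DrOn ψ₁ ⊤ → DrOn ψ₂ ⊤ →
          SolvesDPOn n c d Z ψ₁ φ₁ η₁ ⊤ → SolvesDPOn n c d Z ψ₂ φ₂ η₂ ⊤ →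
          ∀ T : ℝ, 0 ≤ T →
            supNorm (fun s => φ₁ s - φ₂ s) T ≤ κΛ * supNorm (fun s => ψ₁ s - ψ₂ s) T) ∧
        (∀ ψ φ η φ' η' : ℝ → EucSp J, DrOn ψ ⊤ →
          SolvesDPOn n c d Z ψ φ η ⊤ → SolvesDPOn n c d Z ψ φ' η' ⊤ →
          EqOn φ φ' (Ici 0) ∧ EqOn η η' (Ici 0)) := by
  obtain ⟨δ, hδ, B, hBc, hBconv, hBsym, hB0, hBcond⟩ := hB
  obtain ⟨ε, hε, hball⟩ := Metric.mem_nhds_iff.1 (mem_interior_iff_mem_nhds.1 hB0)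
  have hρ : 0 < ε / 2 := by positivity
  have hρB : Metric.closedBall (0 : EucSp J) (ε / 2) ⊆ B :=
    (Metric.closedBall_subset_ball (by linarith)).trans hball
  obtain ⟨R, hR, hBR⟩ := hBc.isBounded.subset_closedBall_lt 0 0
  have hκpos : 0 < 2 * R / δ + R / (ε / 2) :=
    add_pos (div_pos (by linarith) hδ) (div_pos hR hρ)
  refine ⟨2 * R / δ + R / (ε / 2), hκpos, ?_⟩
  intro X Z Y hX hX0 hESP
  obtain ⟨hZc, hYc, hY0, hZXY, hZG, hYinc⟩ := hESP
  have spanconv : ∀ x : EucSp J, Submodule.span ℝ (dCone n c d x) ≤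
      Submodule.span ℝ (d '' ISet n c x) :=
    fun x => Submodule.span_le.2 (coneGen_subset_span _)
  constructor
  · intro ψ₁ ψ₂ φ₁ η₁ φ₂ η₂ hψ₁ hψ₂ hDP₁ hDP₂ T hT
    obtain ⟨hφ₁r, hη₁r, hη₁0, hpt₁, hinc₁⟩ := hDP₁
    obtain ⟨hφ₂r, hη₂r, hη₂0, hpt₂, hinc₂⟩ := hDP₂
    have hψd : DrOn (fun s => ψ₁ s - ψ₂ s) ⊤ := by
      constructor
      · intro t ht htop
        exact (hψ₁.1 t ht htop).sub (hψ₂.1 t ht htop)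
      · intro t ht htop
        obtain ⟨L₁, h₁⟩ := hψ₁.2 t ht htop
        obtain ⟨L₂, h₂⟩ := hψ₂.2 t ht htop
        exact ⟨L₁ - L₂, h₁.sub h₂⟩
    obtain ⟨C, hC⟩ := bdd_of_DrOn _ hψd T
    have hbddA : BddAbove (Set.range fun s : Icc (0:ℝ) T => ‖ψ₁ s.1 - ψ₂ s.1‖) := by
      refine ⟨C, ?_⟩
      rintro y ⟨u, rfl⟩
      exact hC u.1 u.2
    have hMle : ∀ u ∈ Icc (0:ℝ) T, ‖ψ₁ u - ψ₂ u‖ ≤ supNorm (fun s => ψ₁ s - ψ₂ s) T :=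
      fun u hu => le_ciSup hbddA ⟨u, hu⟩
    have hM0 : 0 ≤ supNorm (fun s => ψ₁ s - ψ₂ s) T :=
      Real.iSup_nonneg fun s => norm_nonneg _
    refine Real.iSup_le ?_ (mul_nonneg hκpos.le hM0)
    rintro ⟨s, hs⟩
    exact dp_main n d c hn hδ hBconv hB0 hBcond hρ hρB hR hBR Z hZc
      (fun t => ψ₁ t - ψ₂ t) (fun t => φ₁ t - φ₂ t) (fun t => η₁ t - η₂ t)
      (fun t ht => (hη₁r.1 t ht (by simp)).sub (hη₂r.1 t ht (by simp)))
      (Submodule.sub_mem _ (spanconv _ hη₁0) (spanconv _ hη₂0))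
      (fun t ht => ⟨by
          show φ₁ t - φ₂ t = (ψ₁ t - ψ₂ t) + (η₁ t - η₂ t)
          rw [(hpt₁ t ht (by simp)).1, (hpt₂ t ht (by simp)).1]; abel,
        fun i hi => by
          show ⟪φ₁ t - φ₂ t, n i⟫ = 0
          rw [inner_sub_left, (hpt₁ t ht (by simp)).2 i hi, (hpt₂ t ht (by simp)).2 i hi,
            sub_zero]⟩)
      (fun s' t' hs' hst' => by
        show (η₁ t' - η₂ t') - (η₁ s' - η₂ s') ∈ _
        have e : (η₁ t' - η₂ t') - (η₁ s' - η₂ s')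
            = (η₁ t' - η₁ s') - (η₂ t' - η₂ s') := by abel
        rw [e]
        exact Submodule.sub_mem _ (hinc₁ s' t' hs' hst' (by simp))
          (hinc₂ s' t' hs' hst' (by simp)))
      T (supNorm (fun s => ψ₁ s - ψ₂ s) T) hMle s hs
  · intro ψ φ η φ' η' hψ hDP hDP'
    obtain ⟨hφr, hηr, hη0A, hptA, hincA⟩ := hDP
    obtain ⟨hφr', hηr', hη0B, hptB, hincB⟩ := hDP'
    have key : ∀ t ∈ Ici (0:ℝ), φ t = φ' t := by
      intro t ht
      have hb := dp_main n d c hn hδ hBconv hB0 hBcond hρ hρB hR hBR Z hZc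
        (fun _ => (0 : EucSp J)) (fun u => φ u - φ' u) (fun u => η u - η' u)
        (fun u hu => (hηr.1 u hu (by simp)).sub (hηr'.1 u hu (by simp)))
        (Submodule.sub_mem _ (spanconv _ hη0A) (spanconv _ hη0B))
        (fun u hu => ⟨by
            show φ u - φ' u = (0 : EucSp J) + (η u - η' u)
            rw [(hptA u hu (by simp)).1, (hptB u hu (by simp)).1]; abel,
          fun i hi => by
            show ⟪φ u - φ' u, n i⟫ = 0
            rw [inner_sub_left, (hptA u hu (by simp)).2 i hi, (hptB u hu (by simp)).2 i hi,
              sub_zero]⟩)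
        (fun s' t' hs' hst' => by
          show (η t' - η' t') - (η s' - η' s') ∈ _
          have e : (η t' - η' t') - (η s' - η' s')
              = (η t' - η s') - (η' t' - η' s') := by abel
          rw [e]
          exact Submodule.sub_mem _ (hincA s' t' hs' hst' (by simp))
            (hincB s' t' hs' hst' (by simp)))
        t 0 (fun u _ => by simp) t ⟨ht, le_rfl⟩
      rw [mul_zero] at hb
      exact sub_eq_zero.1 (norm_le_zero_iff.1 hb)
    refine ⟨fun t ht => key t ht, fun t ht => ?_⟩
    have h₁ := (hptA t ht (by simp)).1
    have h₂ := (hptB t ht (by simp)).1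
    have h3 : ψ t + η t = ψ t + η' t := by rw [← h₁, ← h₂, key t ht]
    exact add_left_cancel h3
end
end
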